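/- arXiv:1302.6447 — 4 statements merged into one kernel-verified Lean document; each statement's English description precedes it below -/
import Mathlib

section
/- Let X be a Fréchet space, F a finite-dimensional subspace of X, p a continuous seminorm on X, and ε > 0. Then there exists a closed subspace E of X of finite codimension such that for all x ∈ E and y ∈ F, p(x + y) ≥ max(p(x)/(2+ε), p(y)/(1+ε)). -/
open Filter Topology

open scoped Classical

/-- Hahn–Banach extension dominated by a seminorm, over `ℝ` or `ℂ`. -/
theorem seminorm_hahn_banach_aux {𝕜 X : Type*} [RCLike 𝕜] [AddCommGroup X] [Module 𝕜 X]
    (p : Seminorm 𝕜 X) (F : Submodule 𝕜 X) (f : F →ₗ[𝕜] 𝕜)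
    (hf : ∀ y : F, ‖f y‖ ≤ p y) :
    ∃ g : X →ₗ[𝕜] 𝕜, (∀ y : F, g y = f y) ∧ ∀ x, ‖g x‖ ≤ p x := by
  letI : SeminormedAddCommGroup X := AddGroupSeminorm.toSeminormedAddCommGroup p.toAddGroupSeminorm
  letI : NormedSpace 𝕜 X := ⟨fun a x => (map_smul_eq_mul p a x).le⟩
  have hnorm : ∀ x : X, ‖x‖ = p x := fun _ => rfl
  let f' : F →L[𝕜] 𝕜 := f.mkContinuous 1 (fun y => by simpa [hnorm] using hf y)
  have hf'norm : ‖f'‖ ≤ 1 := f.mkContinuous_norm_le zero_le_one _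
  obtain ⟨g, hg, hgnorm⟩ := exists_extension_norm_eq F f'
  refine ⟨g.toLinearMap, fun y => hg y, fun x => ?_⟩
  calc ‖g x‖ ≤ ‖g‖ * ‖x‖ := g.le_opNorm x
    _ ≤ 1 * p x := by
        rw [hgnorm]
        exact mul_le_mul hf'norm (hnorm x).le (norm_nonneg x) zero_le_one
    _ = p x := one_mul _


/-- A finite family of functionals dominated by a seminorm on a finite-dimensional space,
almost attaining the seminorm. -/
theorem seminorm_net_aux {𝕜 F : Type*} [RCLike 𝕜] [AddCommGroup F] [Module 𝕜 F]
    [Module.Finite 𝕜 F] (q : Seminorm 𝕜 F) {δ : ℝ} (hδ : 0 < δ) :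
    ∃ s : Finset (F →ₗ[𝕜] 𝕜), (∀ f ∈ s, ∀ y, ‖f y‖ ≤ q y) ∧
      ∀ y, ∃ f ∈ s, q y ≤ (1 + δ) * ‖f y‖ := by
  letI : SeminormedAddCommGroup F := AddGroupSeminorm.toSeminormedAddCommGroup q.toAddGroupSeminorm
  letI : NormedSpace 𝕜 F := ⟨fun a x => (map_smul_eq_mul q a x).le⟩
  have hnorm : ∀ y : F, ‖y‖ = q y := fun _ => rfl
  set V := SeparationQuotient F with hV
  haveI : FiniteDimensional 𝕜 V :=
    Module.Finite.of_surjective (SeparationQuotient.mkCLM 𝕜 F).toLinearMap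
      SeparationQuotient.surjective_mk
  haveI : ProperSpace V := FiniteDimensional.proper 𝕜 V
  set δ' : ℝ := δ / (1 + δ) with hδ'
  have h1δ : (0:ℝ) < 1 + δ := by linarith
  have hδ'0 : 0 < δ' := div_pos hδ h1δ
  have hsph : IsCompact (Metric.sphere (0:V) 1) := isCompact_sphere 0 1
  -- dual vectors for all sphere points
  have hdual : ∀ v : Metric.sphere (0:V) 1, ∃ g : V →L[𝕜] 𝕜, ‖g‖ = 1 ∧ g v = (‖(v:V)‖ : 𝕜) := by
    intro v
    apply exists_dual_vector 𝕜 (v : V)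
    have : ‖(v:V)‖ = 1 := mem_sphere_zero_iff_norm.mp v.2
    intro h; rw [h] at this; simp at this
  choose G hG1 hG2 using hdual
  -- finite subcover
  obtain ⟨t, ht⟩ := hsph.elim_finite_subcover
    (fun v : Metric.sphere (0:V) 1 => Metric.ball (v:V) δ')
    (fun _ => Metric.isOpen_ball)
    (fun v hv => Set.mem_iUnion.2 ⟨⟨v, hv⟩, by simpa using hδ'0⟩)
  refine ⟨insert 0 (t.image fun v =>
      ((G v).comp (SeparationQuotient.mkCLM 𝕜 F)).toLinearMap), ?_, ?_⟩
  · intro f hf y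
    rcases Finset.mem_insert.mp hf with rfl | hf
    · simp only [LinearMap.zero_apply, norm_zero]; exact apply_nonneg q y
    · obtain ⟨v, _, rfl⟩ := Finset.mem_image.mp hf
      calc ‖G v (SeparationQuotient.mk y)‖ ≤ ‖G v‖ * ‖SeparationQuotient.mk y‖ :=
            (G v).le_opNorm _
        _ = q y := by rw [hG1, one_mul, SeparationQuotient.norm_mk, hnorm]
  · intro y
    by_cases hy : q y = 0
    · exact ⟨0, Finset.mem_insert_self _ _, by simp [hy]⟩
    · have hqy : 0 < q y := lt_of_le_of_ne (apply_nonneg q y) (Ne.symm hy)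
      set c : 𝕜 := (algebraMap ℝ 𝕜 (q y))⁻¹ with hc
      have hcnorm : ‖c‖ = (q y)⁻¹ := by
        rw [hc, norm_inv, RCLike.norm_ofReal, abs_of_pos hqy]
      have hz : ‖c • y‖ = 1 := by
        rw [norm_smul, hcnorm, hnorm, inv_mul_cancel₀ hy]
      have hmem : SeparationQuotient.mk (c • y) ∈ Metric.sphere (0:V) 1 := by
        rw [mem_sphere_zero_iff_norm, SeparationQuotient.norm_mk, hz]
      obtain ⟨v, hvt, hvball⟩ := Set.mem_iUnion₂.mp (ht hmem)
      refine ⟨((G v).comp (SeparationQuotient.mkCLM 𝕜 F)).toLinearMap,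
        Finset.mem_insert_of_mem (Finset.mem_image_of_mem _ hvt), ?_⟩
      -- lower bound for ‖G v (mk (c • y))‖
      have hGv1 : ‖G v ((v : V))‖ = 1 := by
        rw [hG2, RCLike.norm_ofReal, abs_of_nonneg (norm_nonneg _),
          mem_sphere_zero_iff_norm.mp v.2]
      have hdist : ‖(v : V) - SeparationQuotient.mk (c • y)‖ < δ' := by
        rw [← dist_eq_norm]
        rw [Metric.mem_ball, dist_comm] at hvball
        exact hvball
      have hlow : 1 - δ' ≤ ‖G v (SeparationQuotient.mk (c • y))‖ := by
        have h1 : ‖G v ((v:V) - SeparationQuotient.mk (c • y))‖ ≤ δ' := by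
          calc ‖G v ((v:V) - SeparationQuotient.mk (c • y))‖
              ≤ ‖G v‖ * ‖(v:V) - SeparationQuotient.mk (c • y)‖ := (G v).le_opNorm _
            _ ≤ 1 * δ' := by
                rw [hG1, one_mul, one_mul]; exact hdist.le
            _ = δ' := one_mul _
        have h2 : G v (SeparationQuotient.mk (c • y)) =
            G v ((v:V)) - G v ((v:V) - SeparationQuotient.mk (c • y)) := by
          rw [map_sub]; ring
        rw [h2]
        calc (1:ℝ) - δ' ≤ ‖G v ((v:V))‖ - ‖G v ((v:V) - SeparationQuotient.mk (c • y))‖ := by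
              rw [hGv1]; linarith
          _ ≤ _ := norm_sub_norm_le _ _
      -- translate to y
      have hkey : ‖G v (SeparationQuotient.mk (c • y))‖ = (q y)⁻¹ * ‖G v (SeparationQuotient.mk y)‖ := by
        have : SeparationQuotient.mk (c • y) = c • SeparationQuotient.mk y := by
          rw [SeparationQuotient.mk_smul]
        rw [this, map_smul, norm_smul, hcnorm]
      have fineq : (1 - δ') * q y ≤ ‖G v (SeparationQuotient.mk y)‖ := by
        have := hlow
        rw [hkey] at this
        have h3 : (1 - δ') * q y ≤ ((q y)⁻¹ * ‖G v (SeparationQuotient.mk y)‖) * q y :=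
          mul_le_mul_of_nonneg_right this hqy.le
        rw [mul_comm ((q y)⁻¹) _, mul_assoc, inv_mul_cancel₀ hy, mul_one] at h3
        exact h3
      have h1mδ' : 1 - δ' = 1 / (1 + δ) := by
        field_simp [hδ']
        rw [hδ', sub_mul, div_mul_cancel₀ _ h1δ.ne']; ring
      calc q y = (1 + δ) * ((1 - δ') * q y) := by rw [h1mδ']; field_simp
        _ ≤ (1 + δ) * ‖G v (SeparationQuotient.mk y)‖ :=
            mul_le_mul_of_nonneg_left fineq h1δ.le
        _ = (1 + δ) * ‖(((G v).comp (SeparationQuotient.mkCLM 𝕜 F)).toLinearMap) y‖ := rfl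


/-- In a Fréchet space, for any finite-dimensional subspace `F`, continuous seminorm `p`
and `ε > 0`, there is a closed subspace `E` of finite codimension such that
`p (x + y) ≥ max (p x / (2+ε)) (p y / (1+ε))` for `x ∈ E`, `y ∈ F`. -/
theorem exists_closed_finite_codim_seminorm_estimate {𝕜 X : Type*} [RCLike 𝕜]
    [AddCommGroup X] [Module 𝕜 X] [UniformSpace X] [IsUniformAddGroup X]
    [ContinuousSMul 𝕜 X] [CompleteSpace X] [T2Space X]
    (pfam : ℕ → Seminorm 𝕜 X) (hpfam : WithSeminorms pfam)
    (F : Submodule 𝕜 X) (hF : Module.Finite 𝕜 F)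
    (p : Seminorm 𝕜 X) (hp : Continuous p) (ε : ℝ) (hε : 0 < ε) :
    ∃ E : Submodule 𝕜 X, IsClosed (E : Set X) ∧ Module.Finite 𝕜 (X ⧸ E) ∧
      ∀ x ∈ E, ∀ y ∈ F, p (x + y) ≥ max (p x / (2 + ε)) (p y / (1 + ε)) := by
  classical
  obtain ⟨s, hs1, hs2⟩ := seminorm_net_aux (p.comp F.subtype) hε
  have hext : ∀ f ∈ s, ∃ g : X →ₗ[𝕜] 𝕜, (∀ y : F, g y = f y) ∧ ∀ x, ‖g x‖ ≤ p x := by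
    intro f hf
    exact seminorm_hahn_banach_aux p F f (fun y => by simpa using hs1 f hf y)
  choose g hg1 hg2 using hext
  have hcont : ∀ (h : X →ₗ[𝕜] 𝕜), (∀ x, ‖h x‖ ≤ p x) → Continuous h := by
    intro h hb
    rw [continuous_iff_continuousAt]
    intro x₀
    have h1 : Filter.Tendsto (fun x => p (x - x₀)) (𝓝 x₀) (𝓝 0) := by
      have hc : Continuous fun x : X => p (x - x₀) := hp.comp (continuous_id.sub continuous_const)
      have := hc.continuousAt (x := x₀)
      simpa [ContinuousAt] using this
    have h2 : Filter.Tendsto (fun x => h x - h x₀) (𝓝 x₀) (𝓝 0) := by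
      rw [tendsto_zero_iff_norm_tendsto_zero]
      exact squeeze_zero (fun x => norm_nonneg _) (fun x => by rw [← map_sub]; exact hb _) h1
    have h3 := h2.add_const (h x₀)
    simpa [ContinuousAt] using h3
  let G : X →ₗ[𝕜] (↥s → 𝕜) := LinearMap.pi (fun i => g i.1 i.2)
  refine ⟨LinearMap.ker G, ?_, ?_, ?_⟩
  · have hset : ((LinearMap.ker G : Submodule 𝕜 X) : Set X) =
        ⋂ i : ↥s, (g i.1 i.2) ⁻¹' {0} := by
      ext x
      simp [G, LinearMap.mem_ker, LinearMap.pi_apply, funext_iff]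
    rw [hset]
    exact isClosed_iInter fun i => (isClosed_singleton).preimage (hcont _ (hg2 i.1 i.2))
  · haveI : FiniteDimensional 𝕜 (↥s → 𝕜) := inferInstance
    exact Module.Finite.equiv G.quotKerEquivRange.symm
  · intro x hx y hy
    obtain ⟨f, hf, hfy⟩ := hs2 ⟨y, hy⟩
    have hx0 : g f hf x = 0 := by
      have hGx : G x = 0 := LinearMap.mem_ker.mp hx
      exact congrFun hGx ⟨f, hf⟩
    have hval : g f hf (x + y) = f ⟨y, hy⟩ := by
      rw [map_add, hx0, zero_add]
      exact hg1 f hf ⟨y, hy⟩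
    have hcomp : (p.comp F.subtype) ⟨y, hy⟩ = p y := rfl
    have key : p y ≤ (1 + ε) * p (x + y) := by
      have h1 : ‖f ⟨y, hy⟩‖ ≤ p (x + y) := by rw [← hval]; exact hg2 f hf (x + y)
      rw [hcomp] at hfy
      calc p y ≤ (1 + ε) * ‖f ⟨y, hy⟩‖ := hfy
        _ ≤ (1 + ε) * p (x + y) := mul_le_mul_of_nonneg_left h1 (by linarith)
    have key2 : p x ≤ (2 + ε) * p (x + y) := by
      have hxle : p x ≤ p (x + y) + p y := by
        have h4 : p x = p ((x + y) + (-y)) := by rw [add_neg_cancel_right]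
        rw [h4]
        calc p ((x + y) + (-y)) ≤ p (x + y) + p (-y) := map_add_le_add p _ _
          _ = p (x + y) + p y := by rw [map_neg_eq_map]
      linarith
    rw [ge_iff_le, max_le_iff]
    have hpos : (0:ℝ) ≤ p (x + y) := apply_nonneg p _
    constructor
    · rw [div_le_iff₀ (by linarith : (0:ℝ) < 2 + ε)]
      linarith
    · rw [div_le_iff₀ (by linarith : (0:ℝ) < 1 + ε)]
      linarith
end

section
/- Let X be a Fréchet space, (p_n) a sequence of continuous seminorms on X, and M an infinite-dimensional subspace such that for every closed subspace E of finite codimension in X one has E ∩ M ⊄ ker p_1. Then for every ε > 0 and every finite family u_1, …, u_n ∈ X there exists u_{n+1} ∈ M with p_1(u_{n+1}) = 1 such that for all j ≤ n and all scalars a_1, …, a_{n+1}, p_j(∑_{k=1}^n a_k u_k) ≤ (1+ε) p_j(∑_{k=1}^{n+1} a_k u_k). -/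
open Filter Topology

/-- The kernel of a seminorm, as a submodule. -/
def Seminorm.kerSubmodule {𝕜 X : Type*} [NormedField 𝕜] [AddCommGroup X] [Module 𝕜 X]
    (p : Seminorm 𝕜 X) : Submodule 𝕜 X where
  carrier := {x | p x = 0}
  zero_mem' := map_zero p
  add_mem' := by
    intro a b ha hb
    simp only [Set.mem_setOf_eq] at *
    exact le_antisymm (by simpa [ha, hb] using map_add_le_add p a b) (apply_nonneg p _)
  smul_mem' := by
    intro c x hx
    simp only [Set.mem_setOf_eq] at *
    simp [map_smul_eq_mul, hx]

section Helpers

open RCLike in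
lemma exists_functional_seminorm {𝕜 X : Type*} [RCLike 𝕜] [AddCommGroup X] [Module 𝕜 X]
    (q : Seminorm 𝕜 X) (w : X) (hw : q w ≠ 0) :
    ∃ f : X →ₗ[𝕜] 𝕜, ‖f w‖ = q w ∧ ∀ x, ‖f x‖ ≤ q x := by
  letI : Module ℝ X := Module.compHom X (algebraMap ℝ 𝕜)
  have hsmul : ∀ (r : ℝ) (x : X), r • x = ((r : 𝕜)) • x := by
    intro r x
    show (algebraMap ℝ 𝕜 r) • x = _
    rw [RCLike.algebraMap_eq_ofReal]
  haveI : IsScalarTower ℝ 𝕜 X := by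
    constructor
    intro r c x
    rw [Algebra.smul_def r c, mul_smul, hsmul, RCLike.algebraMap_eq_ofReal]
  have hqsmul : ∀ (r : ℝ) (x : X), q (r • x) = |r| * q x := by
    intro r x
    rw [hsmul, map_smul_eq_mul, RCLike.norm_ofReal]
  have hw0 : w ≠ 0 := by rintro rfl; exact hw (map_zero q)
  set f₀ : X →ₗ.[ℝ] ℝ := LinearPMap.mkSpanSingleton w (q w) hw0 with hf₀
  obtain ⟨g, hg1, hg2⟩ := exists_extension_of_le_sublinear f₀ (fun x => q x)
    (fun c hc x => by rw [hqsmul, abs_of_pos hc])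
    (fun x y => map_add_le_add q x y)
    (by
      rintro ⟨z, hz⟩
      have hz' := hz
      rw [LinearPMap.domain_mkSpanSingleton, Submodule.mem_span_singleton] at hz'
      obtain ⟨c, rfl⟩ := hz'
      have h1 : f₀ ⟨c • w, hz⟩ = c • (q w) := LinearPMap.mkSpanSingleton'_apply _ _ _ c _
      rw [h1]
      show c • (q w) ≤ q (c • w)
      rw [hqsmul, smul_eq_mul]
      exact mul_le_mul_of_nonneg_right (le_abs_self c) (apply_nonneg q w))
  have hgabs : ∀ x, |g x| ≤ q x := by
    intro x
    rw [abs_le]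
    refine ⟨?_, hg2 x⟩
    have h := hg2 (-x)
    rw [map_neg, map_neg_eq_map] at h
    linarith
  set f : X →ₗ[𝕜] 𝕜 := g.extendTo𝕜' with hf
  have hre : ∀ x, re (f x) = g x := fun x => LinearMap.extendTo𝕜'_apply_re g x
  have hbound : ∀ x, ‖f x‖ ≤ q x := by
    intro x
    rcases eq_or_ne (f x) 0 with h | h
    · rw [h, norm_zero]; exact apply_nonneg q x
    · have hsq : ‖f x‖ ^ 2 = g ((starRingEnd 𝕜) (f x) • x) :=
        LinearMap.norm_extendTo𝕜'_apply_sq (𝕜 := 𝕜) g x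
      have h2 : g ((starRingEnd 𝕜) (f x) • x) ≤ q ((starRingEnd 𝕜) (f x) • x) := hg2 _
      have h3 : q ((starRingEnd 𝕜) (f x) • x) = ‖f x‖ * q x := by
        rw [map_smul_eq_mul, RCLike.norm_conj]
      have hnpos : (0:ℝ) < ‖f x‖ := norm_pos_iff.2 h
      nlinarith [hsq, apply_nonneg q x]
  refine ⟨f, ?_, hbound⟩
  have hgw : g w = q w := by
    have hmem : w ∈ f₀.domain := by
      rw [LinearPMap.domain_mkSpanSingleton]; exact Submodule.mem_span_singleton_self w
    have h2 : f₀ ⟨w, hmem⟩ = q w := LinearPMap.mkSpanSingleton'_apply_self _ _ _ _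
    have h3 := hg1 ⟨w, hmem⟩
    rw [h2] at h3
    exact h3
  refine le_antisymm (hbound w) ?_
  calc q w = g w := hgw.symm
    _ = re (f w) := (hre w).symm
    _ ≤ ‖f w‖ := RCLike.re_le_norm _

lemma exists_net_seminorm {𝕜 X : Type*} [RCLike 𝕜] [AddCommGroup X] [Module 𝕜 X]
    (q : Seminorm 𝕜 X) (V : Submodule 𝕜 X) (hV : Module.Finite 𝕜 V) (δ : ℝ) (hδ : 0 < δ) :
    ∃ T : Set X, T.Finite ∧ ∀ x ∈ V, q x = 1 → ∃ w ∈ T, q (x - w) ≤ δ := by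
  classical
  haveI := hV
  set d := Module.finrank 𝕜 V with hd
  let b : Module.Basis (Fin d) 𝕜 V := Module.finBasis 𝕜 V
  let φ : (Fin d → 𝕜) →ₗ[𝕜] X := V.subtype ∘ₗ (b.equivFun.symm : (Fin d → 𝕜) ≃ₗ[𝕜] V).toLinearMap
  let Q : Seminorm 𝕜 (Fin d → 𝕜) := q.comp φ
  -- A bound Q ≤ C * ‖·‖
  obtain ⟨C, hCpos, hCQ⟩ : ∃ C > 0, ∀ c : Fin d → 𝕜, Q c ≤ C * ‖c‖ := by
    refine ⟨(∑ i : Fin d, Q (Pi.single i 1)) + 1, by positivity, fun c => ?_⟩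
    have h1 : Q c = Q (∑ i : Fin d, Pi.single i (c i)) := by
      rw [Finset.univ_sum_single c]
    have h2 : Q (∑ i : Fin d, Pi.single i (c i)) ≤ ∑ i : Fin d, Q (Pi.single i (c i)) :=
      Finset.le_sum_of_subadditive Q (map_zero Q).le (map_add_le_add Q) _ _
    have h3 : ∀ i : Fin d, Q (Pi.single i (c i)) ≤ ‖c‖ * Q (Pi.single i 1) := by
      intro i
      have : Pi.single i (c i) = c i • (Pi.single i (1 : 𝕜) : Fin d → 𝕜) := by
        ext j
        by_cases h : j = i <;> simp [Pi.single_apply, h]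
      rw [this, map_smul_eq_mul]
      exact mul_le_mul_of_nonneg_right (norm_le_pi_norm c i) (apply_nonneg Q _)
    calc Q c ≤ ∑ i : Fin d, Q (Pi.single i (c i)) := h1 ▸ h2
      _ ≤ ∑ i : Fin d, ‖c‖ * Q (Pi.single i 1) := Finset.sum_le_sum fun i _ => h3 i
      _ = (∑ i : Fin d, Q (Pi.single i 1)) * ‖c‖ := by rw [← Finset.mul_sum, mul_comm]
      _ ≤ ((∑ i : Fin d, Q (Pi.single i 1)) + 1) * ‖c‖ := by
          have := norm_nonneg c
          nlinarith
  have hQcont : Continuous Q := by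
    have hlip : LipschitzWith (Real.toNNReal C) Q := by
      apply LipschitzWith.of_dist_le_mul
      intro a bb
      rw [Real.coe_toNNReal _ hCpos.le, Real.dist_eq, dist_eq_norm, abs_sub_le_iff]
      constructor
      · have := map_add_le_add Q (a - bb) bb
        simp only [sub_add_cancel] at this
        have h2 := hCQ (a - bb)
        linarith
      · have := map_add_le_add Q (bb - a) a
        simp only [sub_add_cancel] at this
        have h2 := hCQ (bb - a)
        rw [← norm_neg, neg_sub] at h2
        linarith
    exact hlip.continuous
  set K : Submodule 𝕜 (Fin d → 𝕜) := Q.kerSubmodule with hK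
  obtain ⟨G, hGc⟩ := Submodule.exists_isCompl K
  have hGclosed : IsClosed (G : Set (Fin d → 𝕜)) := Submodule.closed_of_finiteDimensional G
  let π := Submodule.linearProjOfIsCompl G K hGc.symm
  have hπG : ∀ x : Fin d → 𝕜, (π x : Fin d → 𝕜) ∈ G := fun x => (π x).2
  have hQK : ∀ z ∈ K, Q z = 0 := fun z hz => hz
  have hsubK : ∀ x : Fin d → 𝕜, x - (π x : Fin d → 𝕜) ∈ K := by
    intro x
    have h0 : π (x - (π x : Fin d → 𝕜)) = 0 := by
      rw [map_sub, show π (π x : Fin d → 𝕜) = π x from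
        Submodule.linearProjOfIsCompl_apply_left hGc.symm (π x), sub_self]
    have := Submodule.linearProjOfIsCompl_ker (p := G) (q := K) hGc.symm
    rw [← this]
    exact LinearMap.mem_ker.2 h0
  have hQπ : ∀ x : Fin d → 𝕜, Q (π x : Fin d → 𝕜) = Q x := by
    intro x
    have h1 : Q x ≤ Q (π x : Fin d → 𝕜) := by
      have := map_add_le_add Q (x - (π x : Fin d → 𝕜)) (π x : Fin d → 𝕜)
      simp only [sub_add_cancel] at this
      rw [hQK _ (hsubK x)] at this
      linarith
    have h2 : Q (π x : Fin d → 𝕜) ≤ Q x := by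
      have := map_add_le_add Q ((π x : Fin d → 𝕜) - x) x
      simp only [sub_add_cancel] at this
      have hzero : Q ((π x : Fin d → 𝕜) - x) = 0 := by
        rw [← map_neg_eq_map Q, neg_sub]
        exact hQK _ (hsubK x)
      rw [hzero] at this
      linarith
    exact le_antisymm h2 h1
  -- lower bound on G
  obtain ⟨m, hmpos, hmG⟩ : ∃ m > 0, ∀ g ∈ G, m * ‖g‖ ≤ Q g := by
    by_cases hGbot : G = ⊥
    · refine ⟨1, one_pos, fun g hg => ?_⟩
      rw [hGbot, Submodule.mem_bot] at hg
      simp [hg]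
    · obtain ⟨g₀, hg₀G, hg₀⟩ := Submodule.exists_mem_ne_zero_of_ne_bot hGbot
      set S : Set (Fin d → 𝕜) := (G : Set (Fin d → 𝕜)) ∩ Metric.sphere 0 1 with hS
      have hScompact : IsCompact S := (isCompact_sphere (0 : Fin d → 𝕜) 1).inter_left hGclosed
      have hSne : S.Nonempty := by
        refine ⟨((‖g₀‖⁻¹ : ℝ) : 𝕜) • g₀, G.smul_mem _ hg₀G, ?_⟩
        simp only [mem_sphere_iff_norm, sub_zero, norm_smul, RCLike.norm_ofReal]
        rw [abs_of_nonneg (by positivity)]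
        exact inv_mul_cancel₀ (norm_ne_zero_iff.2 hg₀)
      obtain ⟨z, hzS, hzmin⟩ := hScompact.exists_isMinOn hSne hQcont.continuousOn
      have hznorm : ‖z‖ = 1 := by
        have := hzS.2
        rwa [mem_sphere_iff_norm, sub_zero] at this
      have hzG : z ∈ G := hzS.1
      have hmz : 0 < Q z := by
        rcases (apply_nonneg Q z).lt_or_eq with h | h
        · exact h
        · exfalso
          have hzK : z ∈ K := h.symm
          have : z ∈ K ⊓ G := ⟨hzK, hzG⟩
          rw [hGc.inf_eq_bot, Submodule.mem_bot] at this
          rw [this, norm_zero] at hznorm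
          norm_num at hznorm
      refine ⟨Q z, hmz, fun g hg => ?_⟩
      rcases eq_or_ne g 0 with rfl | hgne
      · simp
      · have hgn : (0:ℝ) < ‖g‖ := norm_pos_iff.2 hgne
        have hgS : ((‖g‖⁻¹ : ℝ) : 𝕜) • g ∈ S := by
          refine ⟨G.smul_mem _ hg, ?_⟩
          simp only [mem_sphere_iff_norm, sub_zero, norm_smul, RCLike.norm_ofReal]
          rw [abs_of_nonneg (by positivity)]
          exact inv_mul_cancel₀ hgn.ne'
        have h1 : Q z ≤ Q (((‖g‖⁻¹ : ℝ) : 𝕜) • g) := hzmin hgS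
        rw [map_smul_eq_mul, RCLike.norm_ofReal, abs_of_nonneg (by positivity)] at h1
        calc Q z * ‖g‖ ≤ (‖g‖⁻¹ * Q g) * ‖g‖ := by gcongr
          _ = Q g := by field_simp
  -- compact set S' and its net
  set S' : Set (Fin d → 𝕜) := {c | c ∈ G ∧ Q c = 1} with hS'
  have hS'closed : IsClosed S' := by
    have : S' = (G : Set (Fin d → 𝕜)) ∩ Q ⁻¹' {1} := by
      ext c; simp [hS', Set.mem_inter_iff]
    rw [this]
    exact hGclosed.inter (IsClosed.preimage hQcont isClosed_singleton)
  have hS'sub : S' ⊆ Metric.closedBall 0 (1 / m) := by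
    rintro c ⟨hcG, hcQ⟩
    rw [Metric.mem_closedBall, dist_zero_right]
    have := hmG c hcG
    rw [hcQ] at this
    rw [le_div_iff₀ hmpos]
    linarith
  have hS'compact : IsCompact S' :=
    (isCompact_closedBall (0 : Fin d → 𝕜) (1 / m)).of_isClosed_subset hS'closed hS'sub
  obtain ⟨t, htfin, htcover⟩ := Metric.totallyBounded_iff.1 hS'compact.totallyBounded
    (δ / C) (by positivity)
  refine ⟨φ '' t, htfin.image φ, ?_⟩
  intro x hx hqx
  set c : Fin d → 𝕜 := b.equivFun ⟨x, hx⟩ with hc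
  have hφc : φ c = x := by
    simp only [φ, hc, LinearMap.comp_apply, LinearEquiv.coe_coe, LinearEquiv.symm_apply_apply]
    rfl
  have hQc : Q c = 1 := by
    show q (φ c) = 1
    rw [hφc]; exact hqx
  have hπcS' : (π c : Fin d → 𝕜) ∈ S' := ⟨hπG c, by rw [hQπ]; exact hQc⟩
  obtain ⟨y, hyt, hy⟩ := Set.mem_iUnion₂.1 (htcover hπcS')
  rw [Metric.mem_ball, dist_eq_norm] at hy
  refine ⟨φ y, Set.mem_image_of_mem φ hyt, ?_⟩
  have hxw : x - φ y = φ (c - y) := by rw [map_sub, hφc]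
  rw [hxw]
  show Q (c - y) ≤ δ
  have h1 : Q (c - y) ≤ Q (c - (π c : Fin d → 𝕜)) + Q ((π c : Fin d → 𝕜) - y) := by
    have := map_add_le_add Q (c - (π c : Fin d → 𝕜)) ((π c : Fin d → 𝕜) - y)
    simpa [sub_add_sub_cancel] using this
  rw [hQK _ (hsubK c), zero_add] at h1
  have h2 : Q ((π c : Fin d → 𝕜) - y) ≤ C * ‖(π c : Fin d → 𝕜) - y‖ := hCQ _
  have h3 : C * ‖(π c : Fin d → 𝕜) - y‖ ≤ C * (δ / C) := by gcongr
  have h4 : C * (δ / C) = δ := by field_simp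
  linarith

lemma continuous_of_le_seminorm {𝕜 X : Type*} [RCLike 𝕜] [AddCommGroup X] [Module 𝕜 X]
    [UniformSpace X] [IsUniformAddGroup X]
    (q : Seminorm 𝕜 X) (hq : Continuous q) (f : X →ₗ[𝕜] 𝕜) (hf : ∀ x, ‖f x‖ ≤ q x) :
    Continuous f := by
  have h0 : ContinuousAt f 0 := by
    rw [ContinuousAt, map_zero]
    apply squeeze_zero_norm hf
    have : Filter.Tendsto q (nhds 0) (nhds (q 0)) := hq.tendsto 0
    rwa [map_zero] at this
  exact (uniformContinuous_of_continuousAt_zero f h0).continuous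

lemma finiteCodim_iInf_ker {𝕜 X : Type*} [RCLike 𝕜] [AddCommGroup X] [Module 𝕜 X]
    {ι : Type*} [Finite ι] (f : ι → (X →ₗ[𝕜] 𝕜)) :
    Module.Finite 𝕜 (X ⧸ (⨅ i, LinearMap.ker (f i))) := by
  cases nonempty_fintype ι
  let F : X →ₗ[𝕜] (ι → 𝕜) := LinearMap.pi f
  have hker : LinearMap.ker F = ⨅ i, LinearMap.ker (f i) := LinearMap.ker_pi f
  haveI : Module.Finite 𝕜 (LinearMap.range F) := inferInstance
  have e := F.quotKerEquivRange
  rw [hker] at e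
  exact Module.Finite.equiv e.symm

end Helpers

/-- Corollary: in a Fréchet space, given continuous seminorms `p n` and an
infinite-dimensional subspace `M` such that `E ⊓ M ⊄ ker p₀` for every closed subspace `E`
of finite codimension, one may extend any finite family by a vector of `M` of `p₀`-norm one
while controlling the seminorms of linear combinations. (Indices are 0-based, so `p 0`
plays the role of `p₁`.) -/
theorem exists_extension_basic_step {𝕜 X : Type*} [RCLike 𝕜]
    [AddCommGroup X] [Module 𝕜 X] [UniformSpace X] [IsUniformAddGroup X]
    [ContinuousSMul 𝕜 X] [CompleteSpace X] [T2Space X]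
    (pfam : ℕ → Seminorm 𝕜 X) (hpfam : WithSeminorms pfam)
    (p : ℕ → Seminorm 𝕜 X) (hpc : ∀ n, Continuous (p n))
    (M : Submodule 𝕜 X) (hMinf : ¬ Module.Finite 𝕜 M)
    (hM : ∀ E : Submodule 𝕜 X, IsClosed (E : Set X) → Module.Finite 𝕜 (X ⧸ E) →
      ¬ (E ⊓ M ≤ (p 0).kerSubmodule)) :
    ∀ ε > (0 : ℝ), ∀ (n : ℕ) (u : Fin n → X), ∃ v ∈ M, p 0 v = 1 ∧
      ∀ j < n, ∀ a : Fin (n + 1) → 𝕜,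
        p j (∑ k : Fin n, a k.castSucc • u k) ≤
          (1 + ε) * p j (∑ k : Fin (n + 1), a k • (Fin.snoc u v : Fin (n + 1) → X) k) := by
  classical
  intro ε hε n u
  set δ : ℝ := ε / (2 * (1 + ε)) with hδdef
  have hε1 : (0:ℝ) < 1 + ε := by linarith
  have hδpos : 0 < δ := by positivity
  have hkey : (1 + ε) * (1 - 2 * δ) = 1 := by
    field_simp [hδdef]
    have h2 : δ * (2 * (1 + ε)) = ε := by rw [hδdef, div_mul_cancel₀ _ (by positivity)]
    linear_combination (-1 : ℝ) * h2
  have hδlt : δ < 1 / 2 := by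
    rw [hδdef, div_lt_iff₀ (by positivity)]
    nlinarith
  set V : Submodule 𝕜 X := Submodule.span 𝕜 (Set.range u) with hV
  haveI hVfin : Module.Finite 𝕜 V := Module.Finite.span_of_finite 𝕜 (Set.finite_range u)
  have hnet : ∀ j : Fin n, ∃ T : Set X, T.Finite ∧
      ∀ x ∈ V, p j x = 1 → ∃ w ∈ T, p j (x - w) ≤ δ :=
    fun j => exists_net_seminorm (p j) V hVfin δ hδpos
  choose T hTfin hTnet using hnet
  have hfun : ∀ (j : Fin n) (w : X), ∃ f : X →ₗ[𝕜] 𝕜,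
      (∀ x, ‖f x‖ ≤ p j x) ∧ (p j w ≠ 0 → ‖f w‖ = p j w) := by
    intro j w
    by_cases h : p j w = 0
    · exact ⟨0, by simp [apply_nonneg], fun h' => absurd h h'⟩
    · obtain ⟨f, h1, h2⟩ := exists_functional_seminorm (p j) w h
      exact ⟨f, h2, fun _ => h1⟩
  choose f hfbound hfnorm using hfun
  haveI : ∀ j : Fin n, Finite (T j) := fun j => (hTfin j).to_subtype
  set F : (Σ j : Fin n, T j) → (X →ₗ[𝕜] 𝕜) := fun i => f i.1 (i.2 : X) with hF
  set E : Submodule 𝕜 X := ⨅ i, LinearMap.ker (F i) with hE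
  have hEclosed : IsClosed (E : Set X) := by
    rw [hE, Submodule.coe_iInf]
    refine isClosed_iInter fun i => ?_
    have hcont : Continuous (F i) :=
      continuous_of_le_seminorm (p i.1) (hpc i.1) (F i) (hfbound i.1 (i.2 : X))
    have hker : (LinearMap.ker (F i) : Set X) = (F i) ⁻¹' {0} := by
      ext z; simp [LinearMap.mem_ker]
    rw [hker]
    exact IsClosed.preimage hcont isClosed_singleton
  have hEcodim : Module.Finite 𝕜 (X ⧸ E) := finiteCodim_iInf_ker F
  obtain ⟨v₀, hv₀EM, hv₀p⟩ := SetLike.not_le_iff_exists.1 (hM E hEclosed hEcodim)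
  have hp0 : p 0 v₀ ≠ 0 := fun h => hv₀p h
  have hp0pos : 0 < p 0 v₀ := (apply_nonneg _ _).lt_of_ne' hp0
  set v : X := ((((p 0 v₀)⁻¹ : ℝ)) : 𝕜) • v₀ with hv
  have hvM : v ∈ M := M.smul_mem _ hv₀EM.2
  have hvE : v ∈ E := E.smul_mem _ hv₀EM.1
  have hv1 : p 0 v = 1 := by
    rw [hv, map_smul_eq_mul, RCLike.norm_ofReal,
      abs_of_nonneg (inv_nonneg.2 (apply_nonneg _ _)), inv_mul_cancel₀ hp0]
  refine ⟨v, hvM, hv1, ?_⟩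
  intro j hj a
  set x : X := ∑ k : Fin n, a k.castSucc • u k with hx
  set t : 𝕜 := a (Fin.last n) with ht
  have hsum : ∑ k : Fin (n+1), a k • (Fin.snoc u v : Fin (n+1) → X) k = x + t • v := by
    rw [Fin.sum_univ_castSucc]
    simp [hx, ht]
  rw [hsum]
  have hxV : x ∈ V :=
    Submodule.sum_mem _ fun k _ =>
      Submodule.smul_mem _ _ (Submodule.subset_span (Set.mem_range_self k))
  rcases eq_or_lt_of_le (apply_nonneg (p j) x) with h0 | hcpos
  · rw [← h0]
    exact mul_nonneg hε1.le (apply_nonneg _ _)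
  · set cj : ℝ := p j x with hcj
    set γ : 𝕜 := ((cj : ℝ) : 𝕜) with hγdef
    have hγ : γ ≠ 0 := RCLike.ofReal_ne_zero.2 hcpos.ne'
    set x' : X := γ⁻¹ • x with hx'
    have hx'1 : p j x' = 1 := by
      rw [hx', map_smul_eq_mul, norm_inv, RCLike.norm_ofReal, abs_of_pos hcpos,
        inv_mul_cancel₀ hcpos.ne']
    have hx'V : x' ∈ V := V.smul_mem _ hxV
    obtain ⟨w, hwT, hwnear⟩ := hTnet ⟨j, hj⟩ x' hx'V hx'1
    have hw1 : 1 - δ ≤ p j w := by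
      have htri : p j x' ≤ p j (x' - w) + p j w := by
        have := map_add_le_add (p j) (x' - w) w
        simpa [sub_add_cancel] using this
      rw [hx'1] at htri
      linarith
    have hwne0 : p j w ≠ 0 := by
      intro h
      rw [h] at hw1
      linarith
    set fw : X →ₗ[𝕜] 𝕜 := f ⟨j, hj⟩ w with hfw
    have hfv : fw v = 0 := by
      have hle : E ≤ LinearMap.ker (F ⟨⟨j, hj⟩, ⟨w, hwT⟩⟩) := by
        rw [hE]; exact iInf_le _ _
      exact LinearMap.mem_ker.1 (hle hvE)
    set s : 𝕜 := γ⁻¹ * t with hs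
    have key : 1 - 2 * δ ≤ p j (x' + s • v) := by
      have e1 : fw (w + s • v) = fw w := by
        rw [map_add, map_smul, hfv, smul_zero, add_zero]
      have e2 : ‖fw w‖ = p j w := hfnorm ⟨j, hj⟩ w hwne0
      have e3 : p j w ≤ p j (w + s • v) := by
        calc p j w = ‖fw (w + s • v)‖ := by rw [e1, e2]
          _ ≤ p j (w + s • v) := hfbound ⟨j, hj⟩ w _
      have e4 : p j (w + s • v) ≤ p j (x' + s • v) + p j (w - x') := by
        have := map_add_le_add (p j) (x' + s • v) (w - x')
        have heq : x' + s • v + (w - x') = w + s • v := by abel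
        rw [heq] at this
        exact this
      have e5 : p j (w - x') ≤ δ := by
        rw [← map_neg_eq_map (p j), neg_sub]
        exact hwnear
      linarith
    have hfin : p j (x + t • v) = cj * p j (x' + s • v) := by
      have heq : x + t • v = γ • (x' + s • v) := by
        simp only [hx', hs, smul_add, smul_smul, ← mul_assoc, mul_inv_cancel₀ hγ, one_smul,
          one_mul]
      rw [heq, map_smul_eq_mul, hγdef, RCLike.norm_ofReal, abs_of_pos hcpos]
    rw [hfin]
    calc cj = cj * ((1 + ε) * (1 - 2 * δ)) := by rw [hkey, mul_one]
      _ ≤ cj * ((1 + ε) * p j (x' + s • v)) := by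
          exact mul_le_mul_of_nonneg_left (mul_le_mul_of_nonneg_left key hε1.le) hcpos.le
      _ = (1 + ε) * (cj * p j (x' + s • v)) := by ring
end

section
/- Let X be a Fréchet space with increasing sequence of seminorms (p_n) defining its topology, and let (ε_n) be positive reals with ∏_n (1+ε_n) = K < ∞. Suppose (u_k)_{k≥1} ⊂ X satisfies p_1(u_n) = 1 for all n, and for all n, all j ≤ n and all scalars a_1, …, a_{n+1}: p_j(∑_{k=1}^n a_k u_k) ≤ (1+ε_n) p_j(∑_{k=1}^{n+1} a_k u_k). Then (u_k) is a basic sequence in X, and the closed linear span M_u of (u_k) satisfies M_u ∩ ker p_1 = {0}. -/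
open Filter Topology

/-- A sequence is *basic* if every point of the closed linear span has a unique
representation as a convergent series with respect to the sequence. -/
def IsBasicSequence (𝕜 : Type*) {X : Type*} [RCLike 𝕜] [AddCommGroup X] [Module 𝕜 X]
    [TopologicalSpace X] [IsTopologicalAddGroup X] [ContinuousSMul 𝕜 X] (u : ℕ → X) : Prop :=
  ∀ x ∈ (Submodule.span 𝕜 (Set.range u)).topologicalClosure,
    ∃! a : ℕ → 𝕜,
      Filter.Tendsto (fun N => ∑ k ∈ Finset.range N, a k • u k) Filter.atTop (nhds x)

namespace BSaux

variable {𝕜 X : Type*} [RCLike 𝕜] [AddCommGroup X] [Module 𝕜 X]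

/-- Partial sums of the series `∑ a k • u k`. -/
def S (u : ℕ → X) (a : ℕ → 𝕜) (N : ℕ) : X := ∑ k ∈ Finset.range N, a k • u k

lemma S_sub (u : ℕ → X) (a b : ℕ → 𝕜) (M : ℕ) :
    S u (fun k => a k - b k) M = S u a M - S u b M := by
  simp [S, sub_smul, Finset.sum_sub_distrib]

lemma S_pad (u : ℕ → X) (a : ℕ → 𝕜) {N M : ℕ} (hNM : N ≤ M)
    (h0 : ∀ k, N ≤ k → a k = 0) : S u a M = S u a N := by
  refine (Finset.sum_subset (Finset.range_subset_range.2 hNM) ?_).symm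
  intro k _ hk
  have : N ≤ k := Nat.le_of_not_lt fun h => hk (Finset.mem_range.2 h)
  simp [h0 k this]

lemma keyA (p : ℕ → Seminorm 𝕜 X) (ε : ℕ → ℝ) (K : ℝ) (hε : ∀ n, 0 ≤ ε n)
    (hKfin : ∀ s : Finset ℕ, ∏ i ∈ s, (1 + ε i) ≤ K)
    (u : ℕ → X)
    (hu : ∀ n, ∀ j ≤ n, ∀ a : ℕ → 𝕜, p j (S u a (n + 1)) ≤ (1 + ε n) * p j (S u a (n + 2)))
    (a : ℕ → 𝕜) (j N M : ℕ) (hjN : j < N) (hNM : N ≤ M) :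
    p j (S u a N) ≤ K * p j (S u a M) := by
  obtain ⟨d, rfl⟩ := Nat.exists_eq_add_of_le hNM
  have hprod_nonneg : ∀ d' : ℕ, (0:ℝ) ≤ ∏ i ∈ Finset.range d', (1 + ε (N - 1 + i)) :=
    fun d' => Finset.prod_nonneg fun i _ => by linarith [hε (N - 1 + i)]
  have main : ∀ d' : ℕ,
      p j (S u a N) ≤ (∏ i ∈ Finset.range d', (1 + ε (N - 1 + i))) * p j (S u a (N + d')) := by
    intro d'
    induction d' with
    | zero => simp
    | succ d' ih =>
      have e1 : N - 1 + d' + 1 = N + d' := by omega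
      have e2 : N - 1 + d' + 2 = N + d' + 1 := by omega
      have step := hu (N - 1 + d') j (by omega) a
      rw [e1, e2] at step
      calc p j (S u a N)
          ≤ (∏ i ∈ Finset.range d', (1 + ε (N - 1 + i))) * p j (S u a (N + d')) := ih
        _ ≤ (∏ i ∈ Finset.range d', (1 + ε (N - 1 + i))) *
              ((1 + ε (N - 1 + d')) * p j (S u a (N + d' + 1))) :=
            mul_le_mul_of_nonneg_left step (hprod_nonneg d')
        _ = (∏ i ∈ Finset.range (d' + 1), (1 + ε (N - 1 + i))) * p j (S u a (N + (d' + 1))) := by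
            rw [Finset.prod_range_succ, show N + (d' + 1) = N + d' + 1 from rfl]
            ring
  have hprodK : (∏ i ∈ Finset.range d, (1 + ε (N - 1 + i))) ≤ K := by
    have : (∏ i ∈ Finset.Ico (N - 1) (N - 1 + d), (1 + ε i))
        = ∏ i ∈ Finset.range d, (1 + ε (N - 1 + i)) := by
      rw [Finset.prod_Ico_eq_prod_range, show N - 1 + d - (N - 1) = d by omega]
    rw [← this]
    exact hKfin _
  calc p j (S u a N) ≤ _ := main d
    _ ≤ K * p j (S u a (N + d)) :=
        mul_le_mul_of_nonneg_right hprodK (apply_nonneg _ _)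

lemma coef (p : ℕ → Seminorm 𝕜 X) (ε : ℕ → ℝ) (K : ℝ) (hε : ∀ n, 0 ≤ ε n)
    (hKfin : ∀ s : Finset ℕ, ∏ i ∈ s, (1 + ε i) ≤ K) (hK1 : 1 ≤ K)
    (u : ℕ → X) (hu1 : ∀ n, p 0 (u n) = 1)
    (hu : ∀ n, ∀ j ≤ n, ∀ a : ℕ → 𝕜, p j (S u a (n + 1)) ≤ (1 + ε n) * p j (S u a (n + 2)))
    (a : ℕ → 𝕜) (N m : ℕ) (hmN : m < N) : ‖a m‖ ≤ 2 * K * p 0 (S u a N) := by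
  have h1 : p 0 (S u a (m + 1)) ≤ K * p 0 (S u a N) :=
    keyA p ε K hε hKfin u hu a 0 (m + 1) N (Nat.succ_pos m) hmN
  have h2 : p 0 (S u a m) ≤ K * p 0 (S u a N) := by
    rcases Nat.eq_zero_or_pos m with rfl | hm
    · simp only [S, Finset.range_zero, Finset.sum_empty, map_zero]
      exact mul_nonneg (by linarith) (apply_nonneg _ _)
    · exact keyA p ε K hε hKfin u hu a 0 m N hm hmN.le
  have h3 : ‖a m‖ = p 0 (S u a (m + 1) - S u a m) := by
    have : S u a (m + 1) - S u a m = a m • u m := by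
      simp [S, Finset.sum_range_succ]
    rw [this, map_smul_eq_mul, hu1, mul_one]
  have h4 : p 0 (S u a (m + 1) - S u a m) ≤ p 0 (S u a (m + 1)) + p 0 (S u a m) :=
    map_sub_le_add _ _ _
  rw [h3]
  calc p 0 (S u a (m + 1) - S u a m) ≤ p 0 (S u a (m + 1)) + p 0 (S u a m) := h4
    _ ≤ K * p 0 (S u a N) + K * p 0 (S u a N) := add_le_add h1 h2
    _ = 2 * K * p 0 (S u a N) := by ring

end BSaux

/-- If `(u k)` satisfies `p 0 (u k) = 1` and the perturbation inequalities with constants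
`1 + ε n` whose product is `K < ∞`, then `(u k)` is a basic sequence and the closed linear
span of `(u k)` intersects `ker (p 0)` trivially. (0-based indexing: `p 0` is `p₁`.) -/
theorem basic_sequence_of_perturbation_inequalities {𝕜 X : Type*} [RCLike 𝕜]
    [AddCommGroup X] [Module 𝕜 X] [UniformSpace X] [IsUniformAddGroup X]
    [ContinuousSMul 𝕜 X] [CompleteSpace X] [T2Space X]
    (p : ℕ → Seminorm 𝕜 X) (hp : WithSeminorms p) (hmono : ∀ n, p n ≤ p (n + 1))
    (ε : ℕ → ℝ) (hε : ∀ n, 0 < ε n) (K : ℝ) (hK : HasProd (fun n => 1 + ε n) K)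
    (u : ℕ → X) (hu1 : ∀ n, p 0 (u n) = 1)
    (hu : ∀ n, ∀ j ≤ n, ∀ a : ℕ → 𝕜,
      p j (∑ k ∈ Finset.range (n + 1), a k • u k) ≤
        (1 + ε n) * p j (∑ k ∈ Finset.range (n + 2), a k • u k)) :
    IsBasicSequence 𝕜 u ∧
      (Submodule.span 𝕜 (Set.range u)).topologicalClosure ⊓ (p 0).kerSubmodule = ⊥ := by
  classical
  have hε' : ∀ n, 0 ≤ ε n := fun n => (hε n).le
  have hKfin : ∀ s : Finset ℕ, ∏ i ∈ s, (1 + ε i) ≤ K := by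
    intro s
    refine ge_of_tendsto hK ?_
    filter_upwards [eventually_ge_atTop s] with t hst
    have hsub : s ⊆ t := Finset.le_iff_subset.mp hst
    have hone : (1:ℝ) ≤ ∏ i ∈ t \ s, (1 + ε i) := by
      have := Finset.prod_le_prod (s := t \ s) (f := fun _ : ℕ => (1:ℝ))
        (g := fun i => 1 + ε i) (fun i _ => zero_le_one) (fun i _ => by show (1:ℝ) ≤ 1 + ε i; linarith [hε i])
      simpa using this
    have hnn : (0:ℝ) ≤ ∏ i ∈ s, (1 + ε i) :=
      Finset.prod_nonneg fun i _ => by linarith [hε i]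
    calc ∏ i ∈ s, (1 + ε i) ≤ (∏ i ∈ t \ s, (1 + ε i)) * ∏ i ∈ s, (1 + ε i) :=
          le_mul_of_one_le_left hnn hone
      _ = ∏ i ∈ t, (1 + ε i) := Finset.prod_sdiff hsub
  have hK1 : (1:ℝ) ≤ K := by simpa using hKfin ∅
  have hK0 : (0:ℝ) < K := lt_of_lt_of_le one_pos hK1
  have hmono' : Monotone p := monotone_nat_of_le_succ hmono
  have hu' : ∀ n, ∀ j ≤ n, ∀ a : ℕ → 𝕜,
      p j (BSaux.S u a (n + 1)) ≤ (1 + ε n) * p j (BSaux.S u a (n + 2)) := hu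
  have key : ∀ (a : ℕ → 𝕜) (j N M : ℕ), j < N → N ≤ M →
      p j (BSaux.S u a N) ≤ K * p j (BSaux.S u a M) :=
    fun a j N M hjN hNM => BSaux.keyA p ε K hε' hKfin u hu' a j N M hjN hNM
  have coef : ∀ (a : ℕ → 𝕜) (N m : ℕ), m < N → ‖a m‖ ≤ 2 * K * p 0 (BSaux.S u a N) :=
    fun a N m hmN => BSaux.coef p ε K hε' hKfin hK1 u hu1 hu' a N m hmN
  have hpc : ∀ j, Continuous (p j) := fun j => hp.continuous_seminorm j
  haveI := hp.firstCountableTopology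
  -- Cauchy criterion via seminorms
  have hcauchy : ∀ f : ℕ → X,
      (∀ (j : ℕ) (δ : ℝ), 0 < δ → ∃ N0, ∀ m n, N0 ≤ m → N0 ≤ n → p j (f m - f n) < δ) →
      CauchySeq f := by
    intro f h
    have hbU : (uniformity X).HasBasis (fun sr : Finset ℕ × ℝ => 0 < sr.2)
        (fun sr => (fun q : X × X => q.2 - q.1) ⁻¹' ((sr.1.sup p).ball 0 sr.2)) := by
      rw [uniformity_eq_comap_nhds_zero X]
      exact hp.hasBasis_zero_ball.comap _
    rw [hbU.cauchySeq_iff]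
    rintro ⟨s, δ⟩ hδ
    obtain ⟨N0, hN0⟩ := h (s.sup id) δ hδ
    refine ⟨N0, fun m hm n hn => ?_⟩
    simp only [Set.mem_preimage, Seminorm.mem_ball, sub_zero]
    refine Seminorm.finset_sup_apply_lt hδ fun i hi => ?_
    exact lt_of_le_of_lt (Seminorm.le_def.mp (hmono' (Finset.le_sup (f := id) hi)) _)
      (hN0 n m hn hm)
  -- coefficients of a sequence of partial sums tending to zero vanish
  have hzero : ∀ c : ℕ → 𝕜, Tendsto (BSaux.S u c) atTop (𝓝 0) → ∀ m, c m = 0 := by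
    intro c hc m
    have h1 : Tendsto (fun N => 2 * K * p 0 (BSaux.S u c N)) atTop (𝓝 (2 * K * 0)) := by
      refine Tendsto.const_mul _ ?_
      have := ((hpc 0).tendsto 0).comp hc
      simpa [Function.comp_def] using this
    rw [mul_zero] at h1
    have h2 : ∀ᶠ N in atTop, ‖c m‖ ≤ 2 * K * p 0 (BSaux.S u c N) :=
      eventually_atTop.2 ⟨m + 1, fun N hN => coef c N m (by omega)⟩
    exact norm_le_zero_iff.mp (ge_of_tendsto h1 h2)
  -- main existence statement
  have hex : ∀ x, x ∈ closure ((Submodule.span 𝕜 (Set.range u) : Submodule 𝕜 X) : Set X) →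
      ∃ a : ℕ → 𝕜, Tendsto (BSaux.S u a) atTop (𝓝 x) := by
    intro x hx
    obtain ⟨y, hy_mem, hy_tend⟩ := mem_closure_iff_seq_limit.mp hx
    have hrep : ∀ i : ℕ, ∃ (N : ℕ) (c : ℕ → 𝕜),
        (∀ k, N ≤ k → c k = 0) ∧ BSaux.S u c N = y i := by
      intro i
      obtain ⟨f, hf⟩ := Finsupp.mem_span_range_iff_exists_finsupp.mp (hy_mem i)
      refine ⟨f.support.sup id + 1, f, fun k hk => ?_, ?_⟩
      · by_contra h
        have hmem : k ∈ f.support := Finsupp.mem_support_iff.2 h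
        have := Finset.le_sup (f := id) hmem
        simp only [id] at this
        omega
      · rw [← hf, Finsupp.sum, BSaux.S]
        refine (Finset.sum_subset ?_ ?_).symm
        · intro k hk
          rw [Finset.mem_range]
          have := Finset.le_sup (f := id) hk
          simp only [id] at this
          omega
        · intro k _ hk
          simp [Finsupp.notMem_support_iff.mp hk]
    choose Nf c hc0 hcS using hrep
    have hdist : ∀ j, Tendsto (fun i => p j (y i - x)) atTop (𝓝 0) := by
      intro j
      have h1 : Tendsto (fun i => y i - x) atTop (𝓝 0) := by
        simpa using hy_tend.sub (tendsto_const_nhds (x := x))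
      have := ((hpc j).tendsto 0).comp h1
      simpa [Function.comp_def] using this
    have hcdiff : ∀ i i' m, ‖c i m - c i' m‖ ≤ 2 * K * p 0 (y i - y i') := by
      intro i i' m
      set M := max (max (Nf i) (Nf i')) (m + 1) with hM
      have hpad1 : BSaux.S u (c i) M = y i :=
        (BSaux.S_pad u (c i) (le_max_of_le_left (le_max_left _ _)) (hc0 i)).trans (hcS i)
      have hpad2 : BSaux.S u (c i') M = y i' :=
        (BSaux.S_pad u (c i') (le_max_of_le_left (le_max_right _ _)) (hc0 i')).trans (hcS i')
      have h1 : BSaux.S u (fun k => c i k - c i' k) M = y i - y i' := by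
        rw [BSaux.S_sub, hpad1, hpad2]
      have h2 := coef (fun k => c i k - c i' k) M m
        ((Nat.lt_succ_self m).trans_le (le_max_right _ _))
      rwa [h1] at h2
    have hccau : ∀ m, CauchySeq (fun i => c i m) := by
      intro m
      rw [Metric.cauchySeq_iff]
      intro δ hδ
      obtain ⟨I, hI⟩ := (Metric.tendsto_atTop.mp (hdist 0)) (δ / (2 * (2 * K + 1)))
        (by positivity)
      refine ⟨I, fun i hi i' hi' => ?_⟩
      have b1 : p 0 (y i - x) < δ / (2 * (2 * K + 1)) := by
        have := hI i hi
        rwa [Real.dist_eq, sub_zero, abs_of_nonneg (apply_nonneg _ _)] at this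
      have b2 : p 0 (y i' - x) < δ / (2 * (2 * K + 1)) := by
        have := hI i' hi'
        rwa [Real.dist_eq, sub_zero, abs_of_nonneg (apply_nonneg _ _)] at this
      have b3 : p 0 (y i - y i') ≤ p 0 (y i - x) + p 0 (y i' - x) := by
        have e : y i - y i' = (y i - x) - (y i' - x) := by abel
        rw [e]
        exact map_sub_le_add _ _ _
      have h4 := hcdiff i i' m
      have h5 : 2 * K * p 0 (y i - y i') ≤ 2 * K * (p 0 (y i - x) + p 0 (y i' - x)) :=
        mul_le_mul_of_nonneg_left b3 (by linarith)
      rw [dist_eq_norm]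
      have h6 : 2 * K * (p 0 (y i - x) + p 0 (y i' - x)) <
          2 * K * (2 * (δ / (2 * (2 * K + 1)))) := by
        apply mul_lt_mul_of_pos_left _ (by linarith)
        linarith
      have h7 : 2 * K * (2 * (δ / (2 * (2 * K + 1)))) < δ := by
        rw [div_eq_mul_inv]
        have hpos : (0:ℝ) < 2 * (2 * K + 1) := by linarith
        rw [show 2 * K * (2 * (δ * (2 * (2 * K + 1))⁻¹)) =
            (4 * K * δ) / (2 * (2 * K + 1)) by ring]
        rw [div_lt_iff₀ hpos]
        nlinarith
      linarith
    have hcl : ∀ m, ∃ L : 𝕜, Tendsto (fun i => c i m) atTop (𝓝 L) :=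
      fun m => cauchySeq_tendsto_of_complete (hccau m)
    choose a ha using hcl
    have hSconv : ∀ M, Tendsto (fun i' => BSaux.S u (c i') M) atTop (𝓝 (BSaux.S u a M)) := by
      intro M
      unfold BSaux.S
      exact tendsto_finset_sum _ fun k _ => (ha k).smul_const (u k)
    have hstar : ∀ j i M, j < M →
        p j (BSaux.S u a M - BSaux.S u (c i) M) ≤ K * p j (x - y i) := by
      intro j i M hjM
      have h1 : Tendsto (fun i' => p j (BSaux.S u (c i') M - BSaux.S u (c i) M)) atTop
          (𝓝 (p j (BSaux.S u a M - BSaux.S u (c i) M))) :=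
        ((hpc j).tendsto _).comp ((hSconv M).sub tendsto_const_nhds)
      have h2 : Tendsto (fun i' => K * p j (y i' - y i)) atTop (𝓝 (K * p j (x - y i))) :=
        Tendsto.const_mul K (((hpc j).tendsto _).comp (hy_tend.sub tendsto_const_nhds))
      refine le_of_tendsto_of_tendsto' h1 h2 fun i' => ?_
      set M' := max M (max (Nf i) (Nf i')) with hM'
      have e1 : BSaux.S u (fun k => c i' k - c i k) M' = y i' - y i := by
        rw [BSaux.S_sub]
        rw [(BSaux.S_pad u (c i') (le_max_of_le_right (le_max_right _ _)) (hc0 i')).trans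
          (hcS i')]
        rw [(BSaux.S_pad u (c i) (le_max_of_le_right (le_max_left _ _)) (hc0 i)).trans
          (hcS i)]
      have e2 : BSaux.S u (fun k => c i' k - c i k) M
          = BSaux.S u (c i') M - BSaux.S u (c i) M := BSaux.S_sub u (c i') (c i) M
      calc p j (BSaux.S u (c i') M - BSaux.S u (c i) M)
          = p j (BSaux.S u (fun k => c i' k - c i k) M) := by rw [e2]
        _ ≤ K * p j (BSaux.S u (fun k => c i' k - c i k) M') :=
            key _ j M M' hjM (le_max_left _ _)
        _ = K * p j (y i' - y i) := by rw [e1]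
    have hSC : CauchySeq (BSaux.S u a) := by
      apply hcauchy
      intro j δ hδ
      obtain ⟨I, hI⟩ := (Metric.tendsto_atTop.mp (hdist j)) (δ / (2 * K + 2)) (by positivity)
      have hb : p j (y I - x) < δ / (2 * K + 2) := by
        have := hI I le_rfl
        rwa [Real.dist_eq, sub_zero, abs_of_nonneg (apply_nonneg _ _)] at this
      refine ⟨max (Nf I) (j + 1), fun m n hm hn => ?_⟩
      have hjm : j < m := lt_of_lt_of_le (Nat.lt_succ_self j) ((le_max_right _ _).trans hm)
      have hjn : j < n := lt_of_lt_of_le (Nat.lt_succ_self j) ((le_max_right _ _).trans hn)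
      have hpm : BSaux.S u (c I) m = y I :=
        (BSaux.S_pad u (c I) ((le_max_left _ _).trans hm) (hc0 I)).trans (hcS I)
      have hpn : BSaux.S u (c I) n = y I :=
        (BSaux.S_pad u (c I) ((le_max_left _ _).trans hn) (hc0 I)).trans (hcS I)
      have d1 := hstar j I m hjm
      have d2 := hstar j I n hjn
      rw [hpm] at d1
      rw [hpn] at d2
      have e : BSaux.S u a m - BSaux.S u a n
          = (BSaux.S u a m - y I) - (BSaux.S u a n - y I) := by abel
      have tri : p j (BSaux.S u a m - BSaux.S u a n)
          ≤ p j (BSaux.S u a m - y I) + p j (BSaux.S u a n - y I) := by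
        rw [e]
        exact map_sub_le_add _ _ _
      have hsymm : p j (x - y I) = p j (y I - x) := by
        rw [← neg_sub, map_neg_eq_map]
      have hKb : K * p j (x - y I) < K * (δ / (2 * K + 2)) := by
        rw [hsymm]
        exact mul_lt_mul_of_pos_left hb hK0
      have hfin : 2 * (K * (δ / (2 * K + 2))) ≤ δ := by
        rw [div_eq_mul_inv]
        have hpos : (0:ℝ) < 2 * K + 2 := by linarith
        rw [show 2 * (K * (δ * (2 * K + 2)⁻¹)) = (2 * K * δ) / (2 * K + 2) by ring]
        rw [div_le_iff₀ hpos]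
        nlinarith
      linarith
    obtain ⟨z, hz⟩ := cauchySeq_tendsto_of_complete hSC
    have hxz : ∀ j, p j (x - z) = 0 := by
      intro j
      have h0 : ∀ i, p j (x - z) ≤ (1 + K) * p j (y i - x) := by
        intro i
        have hM : ∀ M, max (Nf i) (j + 1) ≤ M →
            p j (x - z) ≤ (1 + K) * p j (y i - x) + p j (BSaux.S u a M - z) := by
          intro M hMge
          have hjM : j < M := lt_of_lt_of_le (Nat.lt_succ_self j) ((le_max_right _ _).trans hMge)
          have hpadi : BSaux.S u (c i) M = y i :=
            (BSaux.S_pad u (c i) ((le_max_left _ _).trans hMge) (hc0 i)).trans (hcS i)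
          have d := hstar j i M hjM
          rw [hpadi] at d
          have e : x - z = (x - y i) + (y i - BSaux.S u a M) + (BSaux.S u a M - z) := by abel
          have hsymm1 : p j (x - y i) = p j (y i - x) := by rw [← neg_sub, map_neg_eq_map]
          have hsymm2 : p j (y i - BSaux.S u a M) = p j (BSaux.S u a M - y i) := by
            rw [← neg_sub, map_neg_eq_map]
          have t1 : p j (x - z) ≤ p j (x - y i) + p j (y i - BSaux.S u a M)
              + p j (BSaux.S u a M - z) := by
            calc p j (x - z)
                = p j ((x - y i) + (y i - BSaux.S u a M) + (BSaux.S u a M - z)) := by rw [e]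
              _ ≤ p j ((x - y i) + (y i - BSaux.S u a M)) + p j (BSaux.S u a M - z) :=
                  map_add_le_add _ _ _
              _ ≤ p j (x - y i) + p j (y i - BSaux.S u a M) + p j (BSaux.S u a M - z) := by
                  linarith [map_add_le_add (p j) (x - y i) (y i - BSaux.S u a M)]
          have t2 : p j (y i - BSaux.S u a M) ≤ K * p j (x - y i) := by rw [hsymm2]; exact d
          rw [hsymm1] at t1 t2
          have : (1 + K) * p j (y i - x) = p j (y i - x) + K * p j (y i - x) := by ring
          linarith [t1, t2]
        have hlim : Tendsto (fun M => (1 + K) * p j (y i - x) + p j (BSaux.S u a M - z))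
            atTop (𝓝 ((1 + K) * p j (y i - x) + 0)) := by
          refine tendsto_const_nhds.add ?_
          have h1 : Tendsto (fun M => BSaux.S u a M - z) atTop (𝓝 0) := by
            simpa using hz.sub (tendsto_const_nhds (x := z))
          have := ((hpc j).tendsto 0).comp h1
          simpa [Function.comp_def] using this
        have := ge_of_tendsto hlim (eventually_atTop.2 ⟨max (Nf i) (j + 1), hM⟩)
        simpa using this
      have hlim2 : Tendsto (fun i => (1 + K) * p j (y i - x)) atTop (𝓝 0) := by
        have := (hdist j).const_mul (1 + K)
        simpa using this
      have hle := ge_of_tendsto hlim2 (Eventually.of_forall h0)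
      exact le_antisymm hle (apply_nonneg _ _)
    have hxz' : Tendsto (fun _ : ℕ => x) atTop (𝓝 z) := by
      rw [hp.tendsto_nhds]
      intro j δ hδ
      exact Eventually.of_forall fun _ => by rw [hxz j] at *; simpa [hxz j] using hδ
    have hzx : z = x := tendsto_nhds_unique hxz' tendsto_const_nhds
    exact ⟨a, hzx ▸ hz⟩
  constructor
  · intro x hx
    have hx' : x ∈ closure ((Submodule.span 𝕜 (Set.range u) : Submodule 𝕜 X) : Set X) := hx
    obtain ⟨a, haT⟩ := hex x hx'
    refine ⟨a, haT, ?_⟩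
    intro b hbT
    have hsub : Tendsto (BSaux.S u (fun k => b k - a k)) atTop (𝓝 0) := by
      have h1 : Tendsto (fun M => BSaux.S u b M - BSaux.S u a M) atTop (𝓝 (x - x)) :=
        hbT.sub haT
      rw [sub_self] at h1
      have e : BSaux.S u (fun k => b k - a k) = fun M => BSaux.S u b M - BSaux.S u a M :=
        funext (BSaux.S_sub u b a)
      rw [e]
      exact h1
    funext m
    exact sub_eq_zero.mp (hzero _ hsub m)
  · rw [Submodule.eq_bot_iff]
    rintro x hx
    rw [Submodule.mem_inf] at hx
    obtain ⟨hx1, hx2⟩ := hx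
    have hx1' : x ∈ closure ((Submodule.span 𝕜 (Set.range u) : Submodule 𝕜 X) : Set X) := hx1
    obtain ⟨a, haT⟩ := hex x hx1'
    have hp0 : p 0 x = 0 := hx2
    have ham : ∀ m, a m = 0 := by
      intro m
      have h1 : Tendsto (fun N => 2 * K * p 0 (BSaux.S u a N)) atTop (𝓝 (2 * K * p 0 x)) :=
        Tendsto.const_mul _ (((hpc 0).tendsto x).comp haT)
      rw [hp0, mul_zero] at h1
      have h2 : ∀ᶠ N in atTop, ‖a m‖ ≤ 2 * K * p 0 (BSaux.S u a N) :=
        eventually_atTop.2 ⟨m + 1, fun N hN => coef a N m (by omega)⟩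
      exact norm_eq_zero.mp (le_antisymm (ge_of_tendsto h1 h2) (norm_nonneg _))
    have e : BSaux.S u a = fun _ => (0 : X) := by
      funext M
      simp [BSaux.S, ham]
    rw [e] at haT
    exact tendsto_nhds_unique haT tendsto_const_nhds
end

section
/- Let X be a Fréchet space, (p_n) increasing seminorms defining the topology, (ε_n) positive reals with ∏(1+ε_n) = K < ∞, and (u_k) a sequence satisfying p_1(u_k)=1 and the basic sequence inequalities with (ε_n). If (f_k) ⊂ X satisfies ∑_{k=1}^∞ 2K p_k(u_k − f_k) < 1, then (f_k) is a basic sequence equivalent to (u_k), and the closed linear span M_f of (f_k) satisfies M_f ∩ ker p_1 = {0}. -/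
open Filter Topology

section helpers
set_option linter.unusedSectionVars false

variable {𝕜 X : Type*} [RCLike 𝕜] [AddCommGroup X] [Module 𝕜 X] [UniformSpace X]
  [IsUniformAddGroup X] [ContinuousSMul 𝕜 X]

lemma cauchySeq_of_seminorm_bounds (p : ℕ → Seminorm 𝕜 X) (hp : WithSeminorms p)
    (hmono : Monotone p) (S : ℕ → X)
    (h : ∀ i : ℕ, ∀ ε > (0:ℝ), ∃ N, ∀ m ≥ N, ∀ n ≥ N, p i (S n - S m) < ε) :
    CauchySeq S := by
  have hb : (uniformity X).HasBasis (fun sr : Finset ℕ × ℝ => 0 < sr.2)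
      (fun sr => {q : X × X | (sr.1.sup p) (q.2 - q.1) < sr.2}) := by
    rw [uniformity_eq_comap_nhds_zero X]
    have := (hp.hasBasis_ball (x := (0:X))).comap (fun q : X × X => q.2 - q.1)
    refine this.to_hasBasis (fun sr hsr => ⟨sr, hsr, fun q hq => ?_⟩)
      (fun sr hsr => ⟨sr, hsr, fun q hq => ?_⟩)
    · simpa [Seminorm.mem_ball, sub_zero] using hq
    · simpa [Seminorm.mem_ball, sub_zero] using hq
  rw [hb.cauchySeq_iff]
  rintro ⟨s, ε⟩ hε
  obtain ⟨N, hN⟩ := h (s.sup id) ε hε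
  exact ⟨N, fun m hm n hn => Seminorm.finset_sup_apply_lt hε
    (fun i hi => lt_of_le_of_lt (hmono (Finset.le_sup (f := id) hi) _) (hN m hm n hn))⟩


lemma seminorm_sum_le {ι : Type*} (q : Seminorm 𝕜 X) (s : Finset ι) (v : ι → X) :
    q (∑ i ∈ s, v i) ≤ ∑ i ∈ s, q (v i) := by
  classical
  induction s using Finset.induction with
  | empty => simp
  | insert a s h ih =>
    rw [Finset.sum_insert h, Finset.sum_insert h]
    exact (map_add_le_add q _ _).trans (by linarith)

/-- A series whose terms are summable in each seminorm converges. -/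
lemma tendsto_sum_of_summable_seminorm [CompleteSpace X] (p : ℕ → Seminorm 𝕜 X)
    (hp : WithSeminorms p) (hmono : Monotone p) (v : ℕ → X)
    (h : ∀ j : ℕ, Summable fun k => p j (v k)) :
    ∃ x, Tendsto (fun N => ∑ k ∈ Finset.range N, v k) atTop (𝓝 x) := by
  apply cauchySeq_tendsto_of_complete
  apply cauchySeq_of_seminorm_bounds p hp hmono
  intro i ε hε
  have hG : CauchySeq (fun N => ∑ k ∈ Finset.range N, p i (v k)) :=
    (h i).hasSum.tendsto_sum_nat.cauchySeq
  rw [Metric.cauchySeq_iff] at hG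
  obtain ⟨N, hN⟩ := hG ε hε
  refine ⟨N, fun m hm n hn => ?_⟩
  rcases le_total m n with hmn | hmn
  · calc p i (∑ k ∈ Finset.range n, v k - ∑ k ∈ Finset.range m, v k)
        = p i (∑ k ∈ Finset.Ico m n, v k) := by
          rw [Finset.sum_Ico_eq_sub _ hmn]
      _ ≤ ∑ k ∈ Finset.Ico m n, p i (v k) := seminorm_sum_le _ _ _
      _ ≤ |∑ k ∈ Finset.range n, p i (v k) - ∑ k ∈ Finset.range m, p i (v k)| := by
          rw [← Finset.sum_Ico_eq_sub _ hmn]; exact le_abs_self _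
      _ < ε := by simpa [Real.dist_eq] using hN n hn m hm
  · calc p i (∑ k ∈ Finset.range n, v k - ∑ k ∈ Finset.range m, v k)
        = p i (∑ k ∈ Finset.range m, v k - ∑ k ∈ Finset.range n, v k) := map_sub_rev _ _ _
      _ = p i (∑ k ∈ Finset.Ico n m, v k) := by rw [Finset.sum_Ico_eq_sub _ hmn]
      _ ≤ ∑ k ∈ Finset.Ico n m, p i (v k) := seminorm_sum_le _ _ _
      _ ≤ |∑ k ∈ Finset.range m, p i (v k) - ∑ k ∈ Finset.range n, p i (v k)| := by
          rw [← Finset.sum_Ico_eq_sub _ hmn]; exact le_abs_self _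
      _ < ε := by simpa [Real.dist_eq] using hN m hm n hn


lemma exists_range_sum_of_mem_span (g : ℕ → X) {y : X}
    (hy : y ∈ Submodule.span 𝕜 (Set.range g)) :
    ∃ (n : ℕ) (b : ℕ → 𝕜), (∀ k, n ≤ k → b k = 0) ∧
      y = ∑ i ∈ Finset.range n, b i • g i := by
  rw [Finsupp.mem_span_range_iff_exists_finsupp] at hy
  obtain ⟨c, hc⟩ := hy
  refine ⟨c.support.sup id + 1, c, fun k hk => ?_, ?_⟩
  · by_contra h
    have hks : k ∈ c.support := Finsupp.mem_support_iff.2 h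
    have h2 : k ≤ c.support.sup id := Finset.le_sup (f := id) hks
    omega
  · rw [← hc]
    rw [Finsupp.sum_of_support_subset c ?_ _ (fun i _ => zero_smul 𝕜 (g i))]
    intro i hi
    have h2 : i ≤ c.support.sup id := Finset.le_sup (f := id) hi
    simp only [Finset.mem_range]
    omega

lemma isBasicSequence_of_bounds (p : ℕ → Seminorm 𝕜 X)
    (hp : WithSeminorms p) (hmono : Monotone p) (g : ℕ → X) (K₀ : ℝ) (hK₀ : 0 ≤ K₀)
    (C : ℕ → ℝ) (hC : ∀ j, 0 ≤ C j)
    (Hc : ∀ (a : ℕ → 𝕜) (n k : ℕ), k < n →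
      ‖a k‖ ≤ K₀ * p 0 (∑ i ∈ Finset.range n, a i • g i))
    (Hp : ∀ (a : ℕ → 𝕜) (j m n : ℕ), j < m → m ≤ n →
      p j (∑ i ∈ Finset.range m, a i • g i) ≤ C j * p j (∑ i ∈ Finset.range n, a i • g i)) :
    IsBasicSequence 𝕜 g := by
  have hpc : ∀ j, Continuous (p j) := fun j => hp.continuous_seminorm j
  -- uniqueness of coefficients
  have huniq : ∀ c : ℕ → 𝕜,
      Tendsto (fun N => ∑ k ∈ Finset.range N, c k • g k) atTop (𝓝 0) → ∀ k, c k = 0 := by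
    intro c hc k
    have hcont : Tendsto (fun N => K₀ * p 0 (∑ i ∈ Finset.range N, c i • g i)) atTop
        (𝓝 (K₀ * p 0 0)) := (((hpc 0).tendsto 0).comp hc).const_mul K₀
    rw [map_zero, mul_zero] at hcont
    have hle : ‖c k‖ ≤ 0 := by
      refine ge_of_tendsto hcont ?_
      filter_upwards [eventually_ge_atTop (k + 1)] with N hN
      exact Hc c N k (by omega)
    exact norm_le_zero_iff.mp hle
  intro x hx
  have hx' : x ∈ closure ((Submodule.span 𝕜 (Set.range g) : Submodule 𝕜 X) : Set X) := hx
  -- approximating sequence from the span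
  have happ : ∀ i : ℕ, ∃ y ∈ Submodule.span 𝕜 (Set.range g),
      p i (x - y) < 1 / (i + 1) := by
    intro i
    have hpos : (0:ℝ) < 1 / (i + 1) := by positivity
    have hball : (Finset.sup {i} p).ball x (1 / (i + 1)) ∈ 𝓝 x :=
      hp.hasBasis_ball.mem_of_mem (i := (({i} : Finset ℕ), 1 / ((i : ℝ) + 1))) hpos
    obtain ⟨z, hz1, hz2⟩ := mem_closure_iff_nhds.mp hx' _ hball
    refine ⟨z, hz2, ?_⟩
    have : (Finset.sup {i} p) (z - x) < 1 / (i + 1) := hz1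
    rw [Finset.sup_singleton] at this
    rwa [map_sub_rev]
  choose y hyspan hy using happ
  choose n b hb0 hbrep using fun i => exists_range_sum_of_mem_span g (hyspan i)
  have hext : ∀ i m, n i ≤ m → y i = ∑ t ∈ Finset.range m, b i t • g t := by
    intro i m hm
    rw [hbrep i]
    refine Finset.sum_subset (Finset.range_subset_range.2 hm) (fun t ht htn => ?_)
    rw [hb0 i t (by simpa using htn), zero_smul]
  have hext2 : ∀ i i' m, n i ≤ m → n i' ≤ m →
      y i - y i' = ∑ t ∈ Finset.range m, (b i t - b i' t) • g t := by
    intro i i' m h1 h2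
    rw [hext i m h1, hext i' m h2, ← Finset.sum_sub_distrib]
    simp [sub_smul]
  -- p j (x - y i) → 0
  have hyx : ∀ j, Tendsto (fun i => p j (x - y i)) atTop (𝓝 0) := by
    intro j
    refine tendsto_of_tendsto_of_tendsto_of_le_of_le' tendsto_const_nhds
      tendsto_one_div_add_atTop_nhds_zero_nat ?_ ?_
    · exact Eventually.of_forall fun i => apply_nonneg _ _
    · filter_upwards [eventually_ge_atTop j] with i hi
      exact le_of_lt (lt_of_le_of_lt (hmono hi _) (hy i))
  -- coefficients converge
  have hcau : ∀ k, ∃ L : 𝕜, Tendsto (fun i => b i k) atTop (𝓝 L) := by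
    intro k
    apply cauchySeq_tendsto_of_complete
    refine cauchySeq_of_le_tendsto_0 (fun N => K₀ * (2 / ((N:ℝ) + 1))) ?_ ?_
    · intro i i' N hi hi'
      rw [dist_eq_norm]
      set m := max (max (n i) (n i')) (k + 1) with hm
      have hk : ‖b i k - b i' k‖ ≤ K₀ * p 0 (y i - y i') := by
        have := Hc (fun t => b i t - b i' t) m k (by omega)
        rwa [← hext2 i i' m (by omega) (by omega)] at this
      refine hk.trans (mul_le_mul_of_nonneg_left ?_ hK₀)
      have h1 : p 0 (y i - y i') ≤ p 0 (x - y i) + p 0 (x - y i') := by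
        have : y i - y i' = (x - y i') - (x - y i) := by abel
        rw [this]
        exact (map_sub_le_add _ _ _).trans (le_of_eq (add_comm _ _))
      refine h1.trans ?_
      have hbi : p 0 (x - y i) ≤ 1 / (N + 1) := by
        refine le_trans (hmono (Nat.zero_le i) _) ((hy i).le.trans ?_)
        apply one_div_le_one_div_of_le (by positivity)
        have : (N:ℝ) ≤ i := by exact_mod_cast hi
        linarith
      have hbi' : p 0 (x - y i') ≤ 1 / (N + 1) := by
        refine le_trans (hmono (Nat.zero_le i') _) ((hy i').le.trans ?_)
        apply one_div_le_one_div_of_le (by positivity)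
        have : (N:ℝ) ≤ i' := by exact_mod_cast hi'
        linarith
      have : (1:ℝ) / (N+1) + 1 / (N+1) = 2 / (N+1) := by ring
      linarith
    · have : Tendsto (fun N : ℕ => 2 / ((N:ℝ) + 1)) atTop (𝓝 0) := by
        have := (tendsto_one_div_add_atTop_nhds_zero_nat :
          Tendsto (fun n : ℕ => 1 / ((n:ℝ) + 1)) atTop (𝓝 0)).const_mul 2
        simpa [div_eq_mul_inv, mul_zero] using this
      simpa [mul_zero] using this.const_mul K₀
  choose A hA using hcau
  -- the candidate series converges to x
  have hmain : Tendsto (fun N => ∑ k ∈ Finset.range N, A k • g k) atTop (𝓝 x) := by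
    rw [hp.tendsto_nhds]
    intro j ε hε
    set ε' := ε / (2 * (C j + 1)) with hε'
    have hε'pos : 0 < ε' := by
      have := hC j
      positivity
    obtain ⟨i₀, hi₀⟩ := ((hyx j).eventually (gt_mem_nhds hε'pos)).exists
    refine eventually_atTop.2 ⟨max (n i₀) (j + 1), fun N hN => ?_⟩
    have hNj : j < N := by omega
    have hNn : n i₀ ≤ N := by omega
    have key : p j (∑ k ∈ Finset.range N, A k • g k - y i₀) ≤ C j * ε' := by
      have hlim : Tendsto (fun i' => ∑ k ∈ Finset.range N, b i' k • g k - y i₀) atTop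
          (𝓝 (∑ k ∈ Finset.range N, A k • g k - y i₀)) := by
        refine Tendsto.sub_const ?_ _
        exact tendsto_finset_sum _ (fun k _ => (hA k).smul_const (g k))
      have hplim : Tendsto (fun i' => p j (∑ k ∈ Finset.range N, b i' k • g k - y i₀)) atTop
          (𝓝 (p j (∑ k ∈ Finset.range N, A k • g k - y i₀))) :=
        ((hpc j).tendsto _).comp hlim
      have hbnd : ∀ i', p j (∑ k ∈ Finset.range N, b i' k • g k - y i₀) ≤
          C j * (p j (x - y i') + p j (x - y i₀)) := by
        intro i'
        set M := max N (n i') with hM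
        have h1 : ∑ k ∈ Finset.range N, b i' k • g k - y i₀ =
            ∑ k ∈ Finset.range N, (b i' k - b i₀ k) • g k := by
          rw [hext i₀ N hNn, ← Finset.sum_sub_distrib]
          simp [sub_smul]
        have h2 : ∑ k ∈ Finset.range M, (b i' k - b i₀ k) • g k = y i' - y i₀ :=
          (hext2 i' i₀ M (by omega) (by omega)).symm
        rw [h1]
        refine (Hp (fun t => b i' t - b i₀ t) j N M hNj (by omega)).trans ?_
        rw [h2]
        refine mul_le_mul_of_nonneg_left ?_ (hC j)
        have : y i' - y i₀ = (x - y i₀) - (x - y i') := by abel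
        rw [this]
        exact (map_sub_le_add _ _ _).trans (le_of_eq (add_comm _ _))
      have htend2 : Tendsto (fun i' => C j * (p j (x - y i') + p j (x - y i₀))) atTop
          (𝓝 (C j * (0 + p j (x - y i₀)))) :=
        (((hyx j).add_const _).const_mul _)
      have hfinal := le_of_tendsto_of_tendsto' hplim htend2 hbnd
      rw [zero_add] at hfinal
      exact hfinal.trans (mul_le_mul_of_nonneg_left hi₀.le (hC j))
    have hsplit : p j (∑ k ∈ Finset.range N, A k • g k - x) ≤
        p j (∑ k ∈ Finset.range N, A k • g k - y i₀) + p j (x - y i₀) := by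
      have : (∑ k ∈ Finset.range N, A k • g k) - x =
          ((∑ k ∈ Finset.range N, A k • g k) - y i₀) - (x - y i₀) := by abel
      rw [this]
      exact map_sub_le_add _ _ _
    have hCj := hC j
    have : C j * ε' + ε' = ε / 2 := by
      rw [hε']; field_simp
    calc p j (∑ k ∈ Finset.range N, A k • g k - x)
        ≤ C j * ε' + p j (x - y i₀) := by linarith
      _ < C j * ε' + ε' := by linarith
      _ = ε / 2 := this
      _ < ε := by linarith
  refine ⟨A, hmain, fun a' ha' => ?_⟩
  have hdiff : Tendsto (fun N => ∑ k ∈ Finset.range N, (a' k - A k) • g k) atTop (𝓝 0) := by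
    have := ha'.sub hmain
    rw [sub_self] at this
    convert this using 2 with N
    rw [← Finset.sum_sub_distrib]
    simp [sub_smul]
  funext k
  have := huniq _ hdiff k
  exact sub_eq_zero.mp this

end helpers

set_option maxHeartbeats 1000000 in
/-- Stability of basic sequences under small perturbations: if `(u k)` satisfies the
basic-sequence inequalities and `∑ 2 K * p k (u k - f k) < 1`, then `(f k)` is a basic
sequence equivalent to `(u k)`, and its closed linear span meets `ker (p 0)` trivially. -/
theorem basic_sequence_perturbation {𝕜 X : Type*} [RCLike 𝕜]
    [AddCommGroup X] [Module 𝕜 X] [UniformSpace X] [IsUniformAddGroup X]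
    [ContinuousSMul 𝕜 X] [CompleteSpace X] [T2Space X]
    (p : ℕ → Seminorm 𝕜 X) (hp : WithSeminorms p) (hmono : ∀ n, p n ≤ p (n + 1))
    (ε : ℕ → ℝ) (hε : ∀ n, 0 < ε n) (K : ℝ) (hK : HasProd (fun n => 1 + ε n) K)
    (u : ℕ → X) (hu1 : ∀ n, p 0 (u n) = 1)
    (hu : ∀ n, ∀ j ≤ n, ∀ a : ℕ → 𝕜,
      p j (∑ k ∈ Finset.range (n + 1), a k • u k) ≤
        (1 + ε n) * p j (∑ k ∈ Finset.range (n + 2), a k • u k))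
    (f : ℕ → X) (hfsum : Summable fun k => 2 * K * p k (u k - f k))
    (hf : ∑' k, 2 * K * p k (u k - f k) < 1) :
    IsBasicSequence 𝕜 f ∧
      (∀ a : ℕ → 𝕜,
        (∃ x : X, Filter.Tendsto (fun N => ∑ k ∈ Finset.range N, a k • u k)
            Filter.atTop (nhds x)) ↔
        (∃ y : X, Filter.Tendsto (fun N => ∑ k ∈ Finset.range N, a k • f k)
            Filter.atTop (nhds y))) ∧
      (Submodule.span 𝕜 (Set.range f)).topologicalClosure ⊓ (p 0).kerSubmodule = ⊥ := by
  classical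
  have pm : Monotone p := monotone_nat_of_le_succ hmono
  -- finite products are bounded by K
  have prodK : ∀ s : Finset ℕ, ∏ i ∈ s, (1 + ε i) ≤ K := by
    intro s
    refine ge_of_tendsto hK ?_
    filter_upwards [eventually_ge_atTop s] with t ht
    rw [← Finset.prod_sdiff ht]
    have h1 : (1:ℝ) ≤ ∏ i ∈ t \ s, (1 + ε i) := by
      have := Finset.prod_le_prod (f := fun _ : ℕ => (1:ℝ)) (g := fun i => 1 + ε i)
        (s := t \ s) (fun i _ => zero_le_one) (fun i _ => by show (1:ℝ) ≤ 1 + ε i; linarith [hε i])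
      simpa using this
    have h2 : (0:ℝ) ≤ ∏ i ∈ s, (1 + ε i) :=
      Finset.prod_nonneg fun i _ => by linarith [hε i]
    nlinarith
  have hK1 : (1:ℝ) ≤ K := by simpa using prodK ∅
  have hKpos : (0:ℝ) < K := by linarith
  set θ := ∑' k, 2 * K * p k (u k - f k) with hθ
  have hθ0 : 0 ≤ θ := tsum_nonneg fun k => by positivity
  have hθ1 : θ < 1 := hf
  have h1θ : 0 < 1 - θ := by linarith
  have hδ : ∀ s : Finset ℕ, ∑ k ∈ s, 2 * K * p k (u k - f k) ≤ θ :=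
    fun s => Summable.sum_le_tsum s (fun k _ => by positivity) hfsum
  have hδs : Summable fun k => p k (u k - f k) := by
    have h2K : (2 * K) ≠ 0 := by positivity
    have := hfsum.mul_left (2 * K)⁻¹
    refine this.congr fun k => ?_
    field_simp
  -- u satisfies the projection inequality with constant K
  have uHp : ∀ (a : ℕ → 𝕜) (j m nn : ℕ), j < m → m ≤ nn →
      p j (∑ k ∈ Finset.range m, a k • u k) ≤ K * p j (∑ k ∈ Finset.range nn, a k • u k) := by
    intro a j m nn hjm hmn
    have step : ∀ d : ℕ, p j (∑ k ∈ Finset.range m, a k • u k) ≤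
        (∏ i ∈ Finset.range d, (1 + ε (m - 1 + i))) *
          p j (∑ k ∈ Finset.range (m + d), a k • u k) := by
      intro d
      induction d with
      | zero => simp
      | succ d ih =>
        have hprodnn : 0 ≤ ∏ i ∈ Finset.range d, (1 + ε (m - 1 + i)) :=
          Finset.prod_nonneg fun i _ => by linarith [hε (m - 1 + i)]
        have hstep := hu (m - 1 + d) j (by omega) a
        have e1 : m - 1 + d + 1 = m + d := by omega
        have e2 : m - 1 + d + 1 + 1 = m + (d + 1) := by omega
        rw [e1, e2] at hstep
        calc p j (∑ k ∈ Finset.range m, a k • u k)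
            ≤ (∏ i ∈ Finset.range d, (1 + ε (m - 1 + i))) *
                p j (∑ k ∈ Finset.range (m + d), a k • u k) := ih
          _ ≤ (∏ i ∈ Finset.range d, (1 + ε (m - 1 + i))) *
                ((1 + ε (m - 1 + d)) * p j (∑ k ∈ Finset.range (m + (d + 1)), a k • u k)) :=
              mul_le_mul_of_nonneg_left hstep hprodnn
          _ = (∏ i ∈ Finset.range (d + 1), (1 + ε (m - 1 + i))) *
                p j (∑ k ∈ Finset.range (m + (d + 1)), a k • u k) := by
              rw [Finset.prod_range_succ]; ring
    have hs := step (nn - m)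
    rw [Nat.add_sub_cancel' hmn] at hs
    refine hs.trans (mul_le_mul_of_nonneg_right ?_ (apply_nonneg _ _))
    have : ∏ i ∈ Finset.range (nn - m), (1 + ε (m - 1 + i)) =
        ∏ i ∈ Finset.Ico (m - 1) (m - 1 + (nn - m)), (1 + ε i) := by
      rw [Finset.prod_Ico_eq_prod_range]
      simp
    rw [this]
    exact prodK _
  -- coefficient bound for u
  have uHc : ∀ (a : ℕ → 𝕜) (nn k : ℕ), k < nn →
      ‖a k‖ ≤ 2 * K * p 0 (∑ i ∈ Finset.range nn, a i • u i) := by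
    intro a nn k hk
    have h2 : ‖a k‖ = p 0 (a k • u k) := by
      rw [map_smul_eq_mul, hu1, mul_one]
    have h1 : a k • u k = ∑ i ∈ Finset.range (k + 1), a i • u i -
        ∑ i ∈ Finset.range k, a i • u i := by
      rw [Finset.sum_range_succ]; abel
    have h3 : p 0 (a k • u k) ≤ p 0 (∑ i ∈ Finset.range (k + 1), a i • u i) +
        p 0 (∑ i ∈ Finset.range k, a i • u i) := by
      rw [h1]; exact map_sub_le_add _ _ _
    have h4 : p 0 (∑ i ∈ Finset.range (k + 1), a i • u i) ≤
        K * p 0 (∑ i ∈ Finset.range nn, a i • u i) :=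
      uHp a 0 (k + 1) nn (by omega) (by omega)
    have h5 : p 0 (∑ i ∈ Finset.range k, a i • u i) ≤
        K * p 0 (∑ i ∈ Finset.range nn, a i • u i) := by
      rcases Nat.eq_zero_or_pos k with hk0 | hk0
      · subst hk0
        simp only [Finset.range_zero, Finset.sum_empty, map_zero]
        exact mul_nonneg hKpos.le (apply_nonneg _ _)
      · exact uHp a 0 k nn hk0 (by omega)
    linarith
  -- summability of p j of differences
  have pjsummable : ∀ j : ℕ, Summable fun k => p j (u k - f k) := by
    intro j
    rw [← summable_nat_add_iff j]
    refine Summable.of_nonneg_of_le (fun k => apply_nonneg _ _)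
      (fun k => pm (Nat.le_add_left j k) _) ((summable_nat_add_iff j).mpr hδs)
  -- convergence of ∑ a k • (u k - f k) for bounded coefficients
  have diffconv : ∀ (a : ℕ → 𝕜) (A : ℝ), (∀ k, ‖a k‖ ≤ A) →
      ∃ w, Filter.Tendsto (fun N => ∑ k ∈ Finset.range N, a k • (u k - f k))
        Filter.atTop (nhds w) := by
    intro a A hA
    apply tendsto_sum_of_summable_seminorm p hp pm
    intro j
    refine Summable.of_nonneg_of_le (fun k => apply_nonneg _ _) (fun k => ?_)
      ((pjsummable j).mul_left A)
    rw [map_smul_eq_mul]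
    exact mul_le_mul_of_nonneg_right (hA k) (apply_nonneg _ _)
  have hSTdiff : ∀ (a : ℕ → 𝕜) (N : ℕ),
      ∑ k ∈ Finset.range N, a k • u k - ∑ k ∈ Finset.range N, a k • f k =
        ∑ k ∈ Finset.range N, a k • (u k - f k) := by
    intro a N
    rw [← Finset.sum_sub_distrib]
    simp [smul_sub]
  -- key comparison
  have hST : ∀ (a : ℕ → 𝕜) (nn : ℕ),
      p 0 (∑ k ∈ Finset.range nn, a k • u k) ≤
        p 0 (∑ k ∈ Finset.range nn, a k • f k) +
          θ * p 0 (∑ k ∈ Finset.range nn, a k • u k) := by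
    intro a nn
    have e : ∑ k ∈ Finset.range nn, a k • u k =
        ∑ k ∈ Finset.range nn, a k • f k + ∑ k ∈ Finset.range nn, a k • (u k - f k) := by
      rw [← hSTdiff a nn]; abel
    have h1 : p 0 (∑ k ∈ Finset.range nn, a k • u k) ≤
        p 0 (∑ k ∈ Finset.range nn, a k • f k) +
          p 0 (∑ k ∈ Finset.range nn, a k • (u k - f k)) := by
      nth_rewrite 1 [e]
      exact map_add_le_add _ _ _
    have h2 : p 0 (∑ k ∈ Finset.range nn, a k • (u k - f k)) ≤
        ∑ k ∈ Finset.range nn, ‖a k‖ * p 0 (u k - f k) := by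
      refine (seminorm_sum_le _ _ _).trans (le_of_eq ?_)
      exact Finset.sum_congr rfl fun k _ => map_smul_eq_mul _ _ _
    have h3 : ∑ k ∈ Finset.range nn, ‖a k‖ * p 0 (u k - f k) ≤
        p 0 (∑ i ∈ Finset.range nn, a i • u i) * θ := by
      have hterm : ∀ k ∈ Finset.range nn, ‖a k‖ * p 0 (u k - f k) ≤
          p 0 (∑ i ∈ Finset.range nn, a i • u i) * (2 * K * p k (u k - f k)) := by
        intro k hk
        have hak := uHc a nn k (Finset.mem_range.mp hk)
        have hmk : p 0 (u k - f k) ≤ p k (u k - f k) := pm (Nat.zero_le k) _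
        have h2Knn : (0:ℝ) ≤ 2 * K * p 0 (∑ i ∈ Finset.range nn, a i • u i) :=
          mul_nonneg (by positivity) (apply_nonneg _ _)
        calc ‖a k‖ * p 0 (u k - f k)
            ≤ (2 * K * p 0 (∑ i ∈ Finset.range nn, a i • u i)) * p k (u k - f k) :=
              mul_le_mul hak hmk (apply_nonneg _ _) h2Knn
          _ = p 0 (∑ i ∈ Finset.range nn, a i • u i) * (2 * K * p k (u k - f k)) := by ring
      calc ∑ k ∈ Finset.range nn, ‖a k‖ * p 0 (u k - f k)
          ≤ ∑ k ∈ Finset.range nn,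
              p 0 (∑ i ∈ Finset.range nn, a i • u i) * (2 * K * p k (u k - f k)) :=
            Finset.sum_le_sum hterm
        _ = p 0 (∑ i ∈ Finset.range nn, a i • u i) *
              ∑ k ∈ Finset.range nn, 2 * K * p k (u k - f k) := by rw [Finset.mul_sum]
        _ ≤ p 0 (∑ i ∈ Finset.range nn, a i • u i) * θ :=
            mul_le_mul_of_nonneg_left (hδ _) (apply_nonneg _ _)
    calc p 0 (∑ k ∈ Finset.range nn, a k • u k)
        ≤ p 0 (∑ k ∈ Finset.range nn, a k • f k) +
            p 0 (∑ k ∈ Finset.range nn, a k • (u k - f k)) := h1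
      _ ≤ p 0 (∑ k ∈ Finset.range nn, a k • f k) +
            θ * p 0 (∑ k ∈ Finset.range nn, a k • u k) := by
          rw [mul_comm θ]
          linarith
  set K₀ : ℝ := 2 * K / (1 - θ) with hK₀def
  have hK₀ : 0 ≤ K₀ := by positivity
  -- coefficient bound for f
  have fHc : ∀ (a : ℕ → 𝕜) (nn k : ℕ), k < nn →
      ‖a k‖ ≤ K₀ * p 0 (∑ i ∈ Finset.range nn, a i • f i) := by
    intro a nn k hk
    have h0 := hST a nn
    have hS : p 0 (∑ i ∈ Finset.range nn, a i • u i) ≤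
        p 0 (∑ i ∈ Finset.range nn, a i • f i) / (1 - θ) := by
      rw [le_div_iff₀ h1θ]
      linarith
    calc ‖a k‖ ≤ 2 * K * p 0 (∑ i ∈ Finset.range nn, a i • u i) := uHc a nn k hk
      _ ≤ 2 * K * (p 0 (∑ i ∈ Finset.range nn, a i • f i) / (1 - θ)) :=
          mul_le_mul_of_nonneg_left hS (by positivity)
      _ = K₀ * p 0 (∑ i ∈ Finset.range nn, a i • f i) := by
          rw [hK₀def]; ring
  -- tail sums of p j (u k - f k)
  set cc : ℕ → ℝ := fun j => (∑ i ∈ Finset.range j, p j (u i - f i)) + θ / (2 * K) with hccdef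
  have hcc0 : ∀ j, 0 ≤ cc j := fun j =>
    add_nonneg (Finset.sum_nonneg fun i _ => apply_nonneg _ _)
      (div_nonneg hθ0 (by positivity))
  have hcc : ∀ j m : ℕ, ∑ k ∈ Finset.range m, p j (u k - f k) ≤ cc j := by
    intro j m
    rw [← Finset.sum_filter_add_sum_filter_not (Finset.range m) (fun k => k < j)]
    have hA : ∑ k ∈ (Finset.range m).filter (fun k => k < j), p j (u k - f k) ≤
        ∑ i ∈ Finset.range j, p j (u i - f i) := by
      refine Finset.sum_le_sum_of_subset_of_nonneg ?_ fun i _ _ => apply_nonneg _ _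
      intro k hk
      simp only [Finset.mem_filter, Finset.mem_range] at hk ⊢
      omega
    have hB : ∑ k ∈ (Finset.range m).filter (fun k => ¬ k < j), p j (u k - f k) ≤
        θ / (2 * K) := by
      have hstep : ∑ k ∈ (Finset.range m).filter (fun k => ¬ k < j), p j (u k - f k) ≤
          ∑ k ∈ (Finset.range m).filter (fun k => ¬ k < j), p k (u k - f k) := by
        refine Finset.sum_le_sum fun k hk => ?_
        simp only [Finset.mem_filter, Finset.mem_range] at hk
        exact pm (by omega) _
      refine hstep.trans ?_
      rw [le_div_iff₀ (by positivity : (0:ℝ) < 2 * K)]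
      have h2 := hδ ((Finset.range m).filter (fun k => ¬ k < j))
      rw [show ∀ s : Finset ℕ, ∑ k ∈ s, 2 * K * p k (u k - f k) =
        2 * K * ∑ k ∈ s, p k (u k - f k) from fun s => by rw [Finset.mul_sum]] at h2
      linarith
    simp only [hccdef]
    linarith
  -- projection bound for f
  set CC : ℕ → ℝ := fun j => K * (1 + K₀ * cc j) + K₀ * cc j with hCCdef
  have hCC0 : ∀ j, 0 ≤ CC j := by
    intro j
    have h1 := hcc0 j
    have h2 : 0 ≤ K₀ * cc j := mul_nonneg hK₀ h1
    simp only [hCCdef]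
    nlinarith
  have hDj : ∀ (a : ℕ → 𝕜) (j mm nn : ℕ), mm ≤ nn →
      p j (∑ k ∈ Finset.range mm, a k • (u k - f k)) ≤
        K₀ * p 0 (∑ i ∈ Finset.range nn, a i • f i) * cc j := by
    intro a j mm nn hmm
    have h1 : p j (∑ k ∈ Finset.range mm, a k • (u k - f k)) ≤
        ∑ k ∈ Finset.range mm, ‖a k‖ * p j (u k - f k) := by
      refine (seminorm_sum_le _ _ _).trans (le_of_eq ?_)
      exact Finset.sum_congr rfl fun k _ => map_smul_eq_mul _ _ _
    have h2 : ∑ k ∈ Finset.range mm, ‖a k‖ * p j (u k - f k) ≤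
        ∑ k ∈ Finset.range mm,
          (K₀ * p 0 (∑ i ∈ Finset.range nn, a i • f i)) * p j (u k - f k) := by
      refine Finset.sum_le_sum fun k hk => ?_
      refine mul_le_mul_of_nonneg_right ?_ (apply_nonneg _ _)
      exact fHc a nn k (by simp only [Finset.mem_range] at hk; omega)
    have h3 : ∑ k ∈ Finset.range mm,
        (K₀ * p 0 (∑ i ∈ Finset.range nn, a i • f i)) * p j (u k - f k) ≤
          K₀ * p 0 (∑ i ∈ Finset.range nn, a i • f i) * cc j := by
      rw [← Finset.mul_sum]
      refine mul_le_mul_of_nonneg_left (hcc j mm) ?_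
      exact mul_nonneg hK₀ (apply_nonneg _ _)
    linarith
  have fHp : ∀ (a : ℕ → 𝕜) (j m nn : ℕ), j < m → m ≤ nn →
      p j (∑ i ∈ Finset.range m, a i • f i) ≤
        CC j * p j (∑ i ∈ Finset.range nn, a i • f i) := by
    intro a j m nn hjm hmn
    have ht0 : p 0 (∑ i ∈ Finset.range nn, a i • f i) ≤
        p j (∑ i ∈ Finset.range nn, a i • f i) := pm (Nat.zero_le j) _
    have h1 : p j (∑ i ∈ Finset.range m, a i • u i) ≤
        K * p j (∑ i ∈ Finset.range nn, a i • u i) := uHp a j m nn hjm hmn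
    have h2 : p j (∑ i ∈ Finset.range m, a i • f i) ≤
        p j (∑ i ∈ Finset.range m, a i • u i) +
          p j (∑ k ∈ Finset.range m, a k • (u k - f k)) := by
      have e : ∑ i ∈ Finset.range m, a i • f i =
          ∑ i ∈ Finset.range m, a i • u i - ∑ k ∈ Finset.range m, a k • (u k - f k) := by
        rw [← hSTdiff a m]; abel
      rw [e]
      exact map_sub_le_add _ _ _
    have h3 : p j (∑ i ∈ Finset.range nn, a i • u i) ≤
        p j (∑ i ∈ Finset.range nn, a i • f i) +
          p j (∑ k ∈ Finset.range nn, a k • (u k - f k)) := by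
      have e : ∑ i ∈ Finset.range nn, a i • u i =
          ∑ i ∈ Finset.range nn, a i • f i + ∑ k ∈ Finset.range nn, a k • (u k - f k) := by
        rw [← hSTdiff a nn]; abel
      rw [e]
      exact map_add_le_add _ _ _
    have h4 := hDj a j m nn hmn
    have h5 := hDj a j nn nn le_rfl
    have h6 : K₀ * p 0 (∑ i ∈ Finset.range nn, a i • f i) * cc j ≤
        K₀ * cc j * p j (∑ i ∈ Finset.range nn, a i • f i) := by
      have := mul_le_mul_of_nonneg_left ht0 (mul_nonneg hK₀ (hcc0 j))
      nlinarith [mul_nonneg hK₀ (hcc0 j)]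
    simp only [hCCdef]
    nlinarith [apply_nonneg (p j) (∑ i ∈ Finset.range nn, a i • f i), hKpos]
  -- the basic-sequence property for f
  have hbasic : IsBasicSequence 𝕜 f :=
    isBasicSequence_of_bounds p hp pm f K₀ hK₀ CC hCC0 fHc fHp
  refine ⟨hbasic, ?_, ?_⟩
  · -- equivalence of convergence
    intro a
    constructor
    · rintro ⟨x, hx⟩
      obtain ⟨B, hB⟩ : ∃ B, ∀ N, p 0 (∑ k ∈ Finset.range N, a k • u k) ≤ B := by
        have ht : Filter.Tendsto (fun N => p 0 (∑ k ∈ Finset.range N, a k • u k))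
            Filter.atTop (nhds (p 0 x)) := ((hp.continuous_seminorm 0).tendsto x).comp hx
        obtain ⟨B, hB⟩ := ht.bddAbove_range
        exact ⟨B, fun N => hB (Set.mem_range_self N)⟩
      have hak : ∀ k, ‖a k‖ ≤ 2 * K * B := by
        intro k
        refine (uHc a (k + 1) k (by omega)).trans ?_
        exact mul_le_mul_of_nonneg_left (hB (k + 1)) (by positivity)
      obtain ⟨w, hw⟩ := diffconv a (2 * K * B) hak
      refine ⟨x - w, (hx.sub hw).congr fun N => ?_⟩
      rw [← hSTdiff a N]
      abel
    · rintro ⟨yy, hy⟩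
      obtain ⟨B, hB⟩ : ∃ B, ∀ N, p 0 (∑ k ∈ Finset.range N, a k • f k) ≤ B := by
        have ht : Filter.Tendsto (fun N => p 0 (∑ k ∈ Finset.range N, a k • f k))
            Filter.atTop (nhds (p 0 yy)) := ((hp.continuous_seminorm 0).tendsto yy).comp hy
        obtain ⟨B, hB⟩ := ht.bddAbove_range
        exact ⟨B, fun N => hB (Set.mem_range_self N)⟩
      have hSB : ∀ N, p 0 (∑ k ∈ Finset.range N, a k • u k) ≤ B / (1 - θ) := by
        intro N
        have h0 := hST a N
        rw [le_div_iff₀ h1θ]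
        have := hB N
        nlinarith
      have hak : ∀ k, ‖a k‖ ≤ 2 * K * (B / (1 - θ)) := by
        intro k
        refine (uHc a (k + 1) k (by omega)).trans ?_
        exact mul_le_mul_of_nonneg_left (hSB (k + 1)) (by positivity)
      obtain ⟨w, hw⟩ := diffconv a (2 * K * (B / (1 - θ))) hak
      refine ⟨yy + w, (hy.add hw).congr fun N => ?_⟩
      rw [← hSTdiff a N]
      abel
  · -- trivial intersection with the kernel of p 0
    rw [eq_bot_iff]
    intro x hxmem
    rw [Submodule.mem_inf] at hxmem
    obtain ⟨hx1, hx2⟩ := hxmem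
    have hx0 : p 0 x = 0 := hx2
    obtain ⟨a, ha, -⟩ := hbasic x hx1
    have hak : ∀ k, a k = 0 := by
      intro k
      have hcont : Filter.Tendsto
          (fun N => K₀ * p 0 (∑ i ∈ Finset.range N, a i • f i))
          Filter.atTop (nhds (K₀ * p 0 x)) :=
        (((hp.continuous_seminorm 0).tendsto x).comp ha).const_mul K₀
      rw [hx0, mul_zero] at hcont
      have hle : ‖a k‖ ≤ 0 := by
        refine ge_of_tendsto hcont ?_
        filter_upwards [Filter.eventually_ge_atTop (k + 1)] with N hN
        exact fHc a N k (by omega)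
      simpa using norm_le_zero_iff.mp hle
    have hzero : ∀ N, ∑ k ∈ Finset.range N, a k • f k = 0 := by
      intro N
      exact Finset.sum_eq_zero fun k _ => by rw [hak k, zero_smul]
    have h0 : Filter.Tendsto (fun _ : ℕ => (0 : X)) Filter.atTop (nhds x) :=
      ha.congr hzero
    rw [Submodule.mem_bot]
    exact tendsto_nhds_unique h0 tendsto_const_nhds
end
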